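/- arXiv:2101.09767 — 9 statements merged into one kernel-verified Lean document; each statement's English description precedes it below -/
import Mathlib

section
/- Every finite-dimensional associative algebra R over a field F with dim_F R = n - 1 satisfies the standard polynomial identity s_n(x_1,...,x_n) = Σ_{σ ∈ Sym(n)} sgn(σ) x_{σ(1)} ⋯ x_{σ(n)} = 0. -/
/-- Every finite-dimensional associative algebra `R` over a field `F` with
`dim_F R = n - 1` satisfies the standard identity `s_n = 0`. -/
theorem stmt_0 (F : Type*) [Field F] (R : Type*) [Ring R] [Algebra F R]
    [Module.Finite F R] (n : ℕ) (hdim : Module.finrank F R = n - 1) :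
    ∀ a : Fin n → R,
      ∑ σ : Equiv.Perm (Fin n),
        (Equiv.Perm.sign σ : ℤ) • (List.ofFn fun i => a (σ i)).prod = 0 := by
  intro a
  rcases Nat.eq_zero_or_pos n with hn | hn
  · subst hn
    have hsub : Subsingleton R := by
      rw [← Module.finrank_zero_iff (R := F)]
      simpa using hdim
    exact Subsingleton.elim _ _
  · have key := (MultilinearMap.alternatization
      (MultilinearMap.mkPiAlgebraFin F n R)).map_linearDependent a ?_
    · rw [MultilinearMap.alternatization_apply] at key
      simpa [MultilinearMap.domDomCongr, MultilinearMap.mkPiAlgebraFin_apply,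
        Units.smul_def] using key
    · intro h
      have := h.fintype_card_le_finrank
      simp [hdim] at this
      omega
end

section
/- Let f : U × V → W be a bilinear map of vector spaces over a field F such that for each u ∈ U, dim_F f(u, V) ≤ m, and for each v ∈ V, dim_F f(U, v) ≤ n. Then dim_F span(f(U, V)) ≤ mn. -/
open LinearMap Submodule Cardinal Module
open scoped Classical

section Helpers

variable {F : Type*} [Field F]

/-- k+1 linearly independent vectors cannot all lie in a submodule of rank ≤ k. -/
lemma too_many_indep {W : Type*} [AddCommGroup W] [Module F W] {k : ℕ}
    {R : Submodule F W} (hR : Module.rank F R ≤ (k : Cardinal))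
    (y : Fin (k+1) → W) (hy : ∀ i, y i ∈ R) (h : LinearIndependent F y) : False := by
  haveI : Module.Finite F R :=
    Module.rank_lt_aleph0_iff.mp (hR.trans_lt (Cardinal.nat_lt_aleph0 k))
  have h' : LinearIndependent F (fun i => (⟨y i, hy i⟩ : R)) :=
    LinearIndependent.of_comp R.subtype h
  have hcard := h'.fintype_card_le_finrank
  have : (finrank F R : Cardinal) ≤ (k : Cardinal) := by
    rw [finrank_eq_rank]; exact hR
  have hk : finrank F R ≤ k := by exact_mod_cast this
  simp only [Fintype.card_fin] at hcard
  omega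

/-- If y₀ is a nonzero element of W₀ and the images of yB in W/W₀ are independent,
then the cons family is independent. -/
lemma indep_cons {W : Type*} [AddCommGroup W] [Module F W] {k : ℕ} (W₀ : Submodule F W)
    {y₀ : W} (hy₀ : y₀ ∈ W₀) (hy₀' : y₀ ≠ 0) {yB : Fin k → W}
    (hind : LinearIndependent F (fun j => W₀.mkQ (yB j))) :
    LinearIndependent F (Fin.cons y₀ yB : Fin (k+1) → W) := by
  rw [Fintype.linearIndependent_iff]
  intro g hg
  have hg' : g 0 • y₀ + ∑ j : Fin k, g j.succ • yB j = 0 := by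
    rw [Fin.sum_univ_succ] at hg
    simpa using hg
  have hπ : ∑ j : Fin k, g j.succ • W₀.mkQ (yB j) = 0 := by
    have := congrArg W₀.mkQ hg'
    rw [map_add, map_sum, map_zero, map_smul] at this
    have hq0 : W₀.mkQ y₀ = 0 := (Submodule.Quotient.mk_eq_zero W₀).mpr hy₀
    rw [hq0] at this
    simp only [map_smul, smul_zero, zero_add] at this
    exact this
  have hzero : ∀ j : Fin k, g j.succ = 0 :=
    Fintype.linearIndependent_iff.mp hind _ hπ
  have h0 : g 0 • y₀ = 0 := by
    rw [← hg']
    simp [hzero]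
  have hg0 : g 0 = 0 := by
    rcases smul_eq_zero.mp h0 with h | h
    · exact h
    · exact absurd h hy₀'
  intro i
  refine Fin.cases hg0 hzero i

/-- Sum of the indicator of the nonzero part of a nonzero subspace, mod q, is -1. -/
lemma helper_sum [Fintype F] {q : ℕ} (hq : q = Fintype.card F) {M : Type*} [AddCommGroup M]
    [Module F M] [Fintype M] [FiniteDimensional F M] (K : Submodule F M) (hK : K ≠ ⊥)
    (P : M → Prop) [DecidablePred P] (hP : ∀ z, P z ↔ (z ≠ 0 ∧ z ∈ K)) :
    (∑ z : M, if P z then (1 : ZMod q) else 0) = -1 := by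
  subst hq
  classical
  have hPcong : (∑ z : M, if P z then (1 : ZMod (Fintype.card F)) else 0)
      = ∑ z : M, if z ≠ 0 ∧ z ∈ K then (1 : ZMod (Fintype.card F)) else 0 :=
    Finset.sum_congr rfl (fun z _ => if_congr (hP z) rfl rfl)
  rw [hPcong]
  have hsplit : ∀ z : M, (if z ≠ 0 ∧ z ∈ K then (1 : ZMod (Fintype.card F)) else 0)
      = (if z ∈ K then (1 : ZMod (Fintype.card F)) else 0) - (if z = 0 then 1 else 0) := by
    intro z
    by_cases h0 : z = 0
    · subst h0; simp [K.zero_mem]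
    · by_cases hk : z ∈ K <;> simp [h0, hk]
  rw [Finset.sum_congr rfl (fun z _ => hsplit z), Finset.sum_sub_distrib]
  have h1 : (∑ z : M, if z = 0 then (1 : ZMod (Fintype.card F)) else 0) = 1 := by
    rw [Finset.sum_ite_eq' Finset.univ (0 : M) (fun _ => (1 : ZMod (Fintype.card F)))]
    simp
  have h2 : (∑ z : M, if z ∈ K then (1 : ZMod (Fintype.card F)) else 0)
      = ((Fintype.card K : ℕ) : ZMod (Fintype.card F)) := by
    rw [Finset.sum_boole]
    congr 1
    exact (Fintype.card_subtype (fun z => z ∈ K)).symm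
  have hrank : 0 < finrank F K := by
    obtain ⟨x, hxK, hx0⟩ := K.ne_bot_iff.mp hK
    exact Module.finrank_pos_iff_exists_ne_zero.mpr ⟨⟨x, hxK⟩, by simpa using hx0⟩
  have hcard : Fintype.card K = Fintype.card F ^ finrank F K := card_eq_pow_finrank
  have h3 : ((Fintype.card K : ℕ) : ZMod (Fintype.card F)) = 0 := by
    rw [hcard, Nat.cast_pow, ZMod.natCast_self, zero_pow (by omega : finrank F K ≠ 0)]
  rw [h1, h2, h3]
  ring

end Helpers

section Key

universe u₁ u₂ u₃ u₄

variable {F : Type u₁} [Field F] {U : Type u₂} {V : Type u₃}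
  [AddCommGroup U] [Module F U] [AddCommGroup V] [Module F V]

set_option maxHeartbeats 1600000 in
lemma key {W : Type u₄} [AddCommGroup W] [Module F W] (m n : ℕ)
    (f : U →ₗ[F] V →ₗ[F] W)
    (hU : ∀ u, Module.rank F (LinearMap.range (f u)) ≤ (m : Cardinal))
    (hV : ∀ v, Module.rank F (LinearMap.range (f.flip v)) ≤ ((n+1 : ℕ) : Cardinal)) :
    ∃ W₀ : Submodule F W, Module.rank F W₀ ≤ (m : Cardinal) ∧
      ∀ v, Module.rank F ((LinearMap.range (f.flip v)).map W₀.mkQ) ≤ (n : Cardinal) := by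
  classical
  haveI hfdU : ∀ u : U, Module.Finite F (LinearMap.range (f u)) := fun u =>
    Module.rank_lt_aleph0_iff.mp ((hU u).trans_lt (Cardinal.nat_lt_aleph0 m))
  haveI hfdV : ∀ v : V, Module.Finite F (LinearMap.range (f.flip v)) := fun v =>
    Module.rank_lt_aleph0_iff.mp ((hV v).trans_lt (Cardinal.nat_lt_aleph0 _))
  have hle : ∀ u, finrank F (LinearMap.range (f u)) ≤ m := by
    intro u
    have h := hU u
    rw [← finrank_eq_rank] at h
    exact_mod_cast h
  set P : ℕ → Prop := fun k => ∃ u, finrank F (LinearMap.range (f u)) = k with hPdef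
  have hP0 : P 0 := ⟨0, by simp⟩
  set r : ℕ := Nat.findGreatest P m with hrdef
  have hPr : P r := Nat.findGreatest_spec (Nat.zero_le m) hP0
  have hmax : ∀ u, finrank F (LinearMap.range (f u)) ≤ r := fun u =>
    Nat.le_findGreatest (hle u) ⟨u, rfl⟩
  obtain ⟨u₀, hu₀⟩ := hPr
  set A := f u₀ with hA
  set W₀ := LinearMap.range A with hW₀def
  refine ⟨W₀, hU u₀, ?_⟩
  intro v
  by_contra hcon
  haveI : Module.Finite F ((LinearMap.range (f.flip v)).map W₀.mkQ) := Module.Finite.map _ _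
  have hub : finrank F ((LinearMap.range (f.flip v)).map W₀.mkQ) ≤ n + 1 := by
    refine le_trans (Submodule.finrank_map_le _ _) ?_
    have h := hV v
    rw [← finrank_eq_rank] at h
    exact_mod_cast h
  have hlb : ¬ (finrank F ((LinearMap.range (f.flip v)).map W₀.mkQ) ≤ n) := by
    intro h
    apply hcon
    rw [← finrank_eq_rank]
    exact_mod_cast h
  have hfr : finrank F ((LinearMap.range (f.flip v)).map W₀.mkQ) = n + 1 := by omega
  set Qv := (LinearMap.range (f.flip v)).map W₀.mkQ with hQv
  have b := Module.finBasisOfFinrankEq F Qv hfr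
  have hrep : ∀ j : Fin (n+1), ∃ u : U, W₀.mkQ (f u v) = ((b j : Qv) : W ⧸ W₀) := by
    intro j
    obtain ⟨y, hy, hy2⟩ := Submodule.mem_map.mp (b j).2
    obtain ⟨u, hu⟩ := LinearMap.mem_range.mp hy
    refine ⟨u, ?_⟩
    rw [← hy2, ← hu]
    rfl
  choose us hus using hrep
  have hind : LinearIndependent F (fun j => W₀.mkQ (f (us j) v)) := by
    have heq : (fun j => W₀.mkQ (f (us j) v)) = fun j => ((b j : Qv) : W ⧸ W₀) := by
      funext j; exact hus j
    rw [heq]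
    exact b.linearIndependent.map' Qv.subtype Qv.ker_subtype
  have hmemA : ∀ x : V, A x ∈ W₀ := fun x => LinearMap.mem_range_self A x
  have hmemflip : ∀ (x : V) (u : U), f u x ∈ LinearMap.range (f.flip x) := fun x u => ⟨u, rfl⟩
  by_cases hAv : A v = 0
  swap
  · exact too_many_indep (hV v) (Fin.cons (A v) (fun j => f (us j) v))
      (fun i => Fin.cases (hmemflip v u₀) (fun j => hmemflip v (us j)) i)
      (indep_cons W₀ (hmemA v) hAv hind)
  -- now A v = 0
  set uvec : (Fin (n+1) → F) →ₗ[F] U := ∑ j, (LinearMap.proj j).smulRight (us j) with huvec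
  have huvec_apply : ∀ β, uvec β = ∑ j, β j • us j := by
    intro β
    simp [huvec, LinearMap.sum_apply, LinearMap.smulRight_apply, LinearMap.proj_apply]
  have hexp : ∀ (β : Fin (n+1) → F) (x : V),
      f (uvec β) x = ∑ j, β j • f (us j) x := by
    intro β x
    rw [huvec_apply, map_sum, LinearMap.sum_apply]
    refine Finset.sum_congr rfl (fun j _ => ?_)
    rw [map_smul, LinearMap.smul_apply]
  have hexpQ : ∀ (β : Fin (n+1) → F) (x : V),
      W₀.mkQ (f (uvec β) x) = ∑ j, β j • W₀.mkQ (f (us j) x) := by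
    intro β x
    rw [hexp, map_sum]
    refine Finset.sum_congr rfl (fun j _ => ?_)
    rw [map_smul]
  have hind' : ∀ β : Fin (n+1) → F, (∑ j, β j • W₀.mkQ (f (us j) v)) = 0 → β = 0 := by
    intro β hβ
    funext j
    exact Fintype.linearIndependent_iff.mp hind β hβ j
  rcases finite_or_infinite F with hF | hF
  · -- FINITE CASE
    haveI : Fintype F := Fintype.ofFinite F
    haveI : Module.Finite F W₀ := hfdU u₀
    set r' := finrank F W₀ with hr'
    have hr'r : r' = r := by rw [hr', ← hu₀]
    set b₀ := Module.finBasis F W₀ with hb₀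
    have hcs : ∀ i : Fin r', ∃ ci : V, A ci = ((b₀ i : W₀) : W) := by
      intro i
      exact LinearMap.mem_range.mp (b₀ i).2
    choose cs hcs' using hcs
    set e : ((Fin r' → F) × F) →ₗ[F] V :=
      (∑ i, (LinearMap.proj i).smulRight (cs i)).coprod (LinearMap.toSpanSingleton F V v) with he
    have he_apply : ∀ (a : Fin r' → F) (s : F), e (a, s) = (∑ i, a i • cs i) + s • v := by
      intro a s
      simp [he, LinearMap.coprod_apply, LinearMap.sum_apply, LinearMap.smulRight_apply,
        LinearMap.proj_apply, LinearMap.toSpanSingleton_apply]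
    set B : (Fin (n+1) → F) →ₗ[F] ((Fin r' → F) × F) →ₗ[F] W ⧸ W₀ :=
      ((f.compr₂ W₀.mkQ).comp uvec).compl₂ e with hB
    have hBa : ∀ β z, B β z = W₀.mkQ (f (uvec β) (e z)) := fun β z => rfl
    have hAe : ∀ (a : Fin r' → F) (s : F), A (e (a, s)) = ∑ i, a i • ((b₀ i : W₀) : W) := by
      intro a s
      rw [he_apply, map_add, map_smul, hAv, smul_zero, add_zero, map_sum]
      congr 1
      funext i
      rw [map_smul, hcs']
    have hb₀li : LinearIndependent F (fun i => ((b₀ i : W₀) : W)) :=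
      b₀.linearIndependent.map' W₀.subtype W₀.ker_subtype
    -- fact 1 : all kernels are nonzero
    have fact1 : ∀ β, LinearMap.ker (B β) ≠ ⊥ := by
      intro β hbot
      have hinj : Function.Injective (B β) := LinearMap.ker_eq_bot.mp hbot
      have hequiv := LinearEquiv.ofInjective (B β) hinj
      haveI : Module.Finite F (LinearMap.range (B β)) := Module.Finite.equiv hequiv
      have hfeq : finrank F ((Fin r' → F) × F) = finrank F (LinearMap.range (B β)) :=
        hequiv.finrank_eq
      have hDr : finrank F ((Fin r' → F) × F) = r' + 1 := by
        rw [Module.finrank_prod, Module.finrank_fin_fun, Module.finrank_self]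
      have hsub : LinearMap.range (B β) ≤ (LinearMap.range (f (uvec β))).map W₀.mkQ := by
        rintro w ⟨z, rfl⟩
        exact ⟨f (uvec β) (e z), LinearMap.mem_range_self _ _, (hBa β z).symm⟩
      have hsmall : Module.rank F (LinearMap.range (B β)) ≤ (r' : Cardinal) := by
        refine le_trans (Submodule.rank_mono hsub) ?_
        refine le_trans (_root_.rank_map_le _ _) ?_
        rw [← finrank_eq_rank]
        have := hmax (uvec β)
        rw [← hr'r] at this
        exact_mod_cast this
      have hsmall' : finrank F (LinearMap.range (B β)) ≤ r' := by
        rw [← finrank_eq_rank] at hsmall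
        exact_mod_cast hsmall
      omega
    -- fact 2 : covering
    have fact2 : ∀ z : (Fin r' → F) × F, z.1 ≠ 0 → ∃ β, β ≠ 0 ∧ B β z = 0 := by
      rintro ⟨a, s⟩ ha
      set x := e (a, s) with hx
      have hAx : A x ≠ 0 := by
        rw [hx, hAe]
        intro h
        apply ha
        funext i
        exact Fintype.linearIndependent_iff.mp hb₀li a h i
      have hnotli : ¬ LinearIndependent F (Fin.cons (A x) (fun j => f (us j) x) :
          Fin (n+1+1) → W) := by
        intro h
        exact too_many_indep (hV x) _
          (fun i => Fin.cases (hmemflip x u₀) (fun j => hmemflip x (us j)) i) h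
      rw [Fintype.not_linearIndependent_iff] at hnotli
      obtain ⟨g, hg, i₀, hi₀⟩ := hnotli
      set β := fun j : Fin (n+1) => g j.succ with hβdef
      have hsum : g 0 • A x + ∑ j, β j • f (us j) x = 0 := by
        have h2 := hg
        rw [Fin.sum_univ_succ] at h2
        simpa [hβdef] using h2
      have hβ0 : β ≠ 0 := by
        intro hzero
        have hzz : ∀ j : Fin (n+1), β j = 0 := fun j => congrFun hzero j
        have hg00 : g 0 • A x = 0 := by
          have := hsum
          simp only [hzz, zero_smul, Finset.sum_const_zero, add_zero] at this
          exact this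
        have hg0 : g 0 = 0 := by
          rcases smul_eq_zero.mp hg00 with h | h
          · exact h
          · exact absurd h hAx
        have : g i₀ = 0 := by
          refine Fin.cases hg0 (fun j => ?_) i₀
          exact hzz j
        exact hi₀ this
      refine ⟨β, hβ0, ?_⟩
      rw [hBa, hexp]
      have hsum2 : ∑ j, β j • f (us j) x = -(g 0 • A x) := by
        rw [eq_neg_iff_add_eq_zero, add_comm]
        exact hsum
      rw [hsum2, map_neg, map_smul]
      have : W₀.mkQ (A x) = 0 := (Submodule.Quotient.mk_eq_zero W₀).mpr (hmemA x)
      rw [this, smul_zero, neg_zero]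
    -- fact 3 : the line F v is not covered
    have fact3 : ∀ (s : F), s ≠ 0 → ∀ β, β ≠ 0 → B β ((0 : Fin r' → F), s) ≠ 0 := by
      intro s hs β hβ heq
      have he0 : e ((0 : Fin r' → F), s) = s • v := by
        rw [he_apply]
        simp
      rw [hBa, he0, map_smul, map_smul] at heq
      have h2 : W₀.mkQ (f (uvec β) v) = 0 := by
        rcases smul_eq_zero.mp heq with h | h
        · exact absurd h hs
        · exact h
      rw [hexpQ] at h2
      exact hβ (hind' β h2)
    -- THE COUNT
    set q := Fintype.card F with hq
    have hq2 : 1 < q := Fintype.one_lt_card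
    have hswap := Finset.sum_comm (s := (Finset.univ : Finset (Fin (n+1) → F)))
      (t := (Finset.univ : Finset ((Fin r' → F) × F)))
      (f := fun β z => if β ≠ 0 ∧ z ≠ 0 ∧ B β z = 0 then (1 : ZMod q) else 0)
    haveI : NeZero q := ⟨by omega⟩
    have hside1 : (∑ β : Fin (n+1) → F, ∑ z : (Fin r' → F) × F,
        if β ≠ 0 ∧ z ≠ 0 ∧ B β z = 0 then (1 : ZMod q) else 0) = 1 := by
      have hterm : ∀ β : Fin (n+1) → F,
          (∑ z : (Fin r' → F) × F, if β ≠ 0 ∧ z ≠ 0 ∧ B β z = 0 then (1 : ZMod q) else 0)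
          = (if β = 0 then (1 : ZMod q) else 0) - 1 := by
        intro β
        by_cases hb : β = 0
        · simp [hb]
        · rw [helper_sum hq _ (fact1 β) _ (fun z => by simp [hb, LinearMap.mem_ker])]
          simp [hb]
      rw [Finset.sum_congr rfl (fun β _ => hterm β), Finset.sum_sub_distrib]
      have ha : (∑ β : Fin (n+1) → F, if β = 0 then (1 : ZMod q) else 0) = 1 := by
        rw [Finset.sum_ite_eq' Finset.univ (0 : Fin (n+1) → F) (fun _ => (1 : ZMod q))]
        simp
      have hcardf : Fintype.card (Fin (n+1) → F) = q ^ (n+1) := by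
        rw [Fintype.card_fun]
        simp [hq]
      have hb2 : (∑ _β : Fin (n+1) → F, (1 : ZMod q)) = 0 := by
        rw [Finset.sum_const, Finset.card_univ, hcardf, nsmul_eq_mul, mul_one]
        rw [Nat.cast_pow, ZMod.natCast_self, zero_pow (by omega : n + 1 ≠ 0)]
      rw [ha, hb2, sub_zero]
    have hside2 : (∑ z : (Fin r' → F) × F, ∑ β : Fin (n+1) → F,
        if β ≠ 0 ∧ z ≠ 0 ∧ B β z = 0 then (1 : ZMod q) else 0) = 0 := by
      have hterm : ∀ z : (Fin r' → F) × F,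
          (∑ β : Fin (n+1) → F, if β ≠ 0 ∧ z ≠ 0 ∧ B β z = 0 then (1 : ZMod q) else 0)
          = (if z.1 = 0 then (1 : ZMod q) else 0) - 1 := by
        intro z
        by_cases hz1 : z.1 = 0
        · rw [if_pos hz1]
          by_cases hz0 : z = 0
          · simp [hz0]
          · rw [Finset.sum_eq_zero, sub_self]
            intro β _
            rw [if_neg]
            rintro ⟨hβ, hzz, hBz⟩
            have hz2 : z.2 ≠ 0 := by
              intro h2
              exact hz0 (Prod.ext hz1 h2)
            have hzeq : z = ((0 : Fin r' → F), z.2) := Prod.ext hz1 rfl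
            rw [hzeq] at hBz
            exact fact3 z.2 hz2 β hβ hBz
        · rw [if_neg hz1]
          have hz0 : z ≠ 0 := by
            intro h
            exact hz1 (by rw [h]; rfl)
          obtain ⟨β₁, hβ₁ne, hβ₁0⟩ := fact2 z hz1
          have hker : LinearMap.ker (B.flip z) ≠ ⊥ := by
            rw [Submodule.ne_bot_iff]
            refine ⟨β₁, ?_, hβ₁ne⟩
            rw [LinearMap.mem_ker, LinearMap.flip_apply]
            exact hβ₁0
          rw [helper_sum hq _ hker _
            (fun β => by simp [hz0, LinearMap.mem_ker, LinearMap.flip_apply, and_comm])]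
          rw [zero_sub]
      rw [Finset.sum_congr rfl (fun z _ => hterm z), Finset.sum_sub_distrib]
      have ha : (∑ z : (Fin r' → F) × F, if z.1 = 0 then (1 : ZMod q) else 0) = 0 := by
        rw [Fintype.sum_prod_type]
        rw [Finset.sum_eq_zero]
        intro a _
        by_cases h : a = 0
        · rw [Finset.sum_congr rfl (fun s _ => if_pos h), Finset.sum_const, Finset.card_univ,
            nsmul_eq_mul, mul_one, ← hq, ZMod.natCast_self]
        · rw [Finset.sum_congr rfl (fun s _ => if_neg h), Finset.sum_const, smul_zero]
      have hcardD : Fintype.card ((Fin r' → F) × F) = q ^ r' * q := by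
        rw [Fintype.card_prod, Fintype.card_fun]
        simp [hq]
      have hb2 : (∑ _z : (Fin r' → F) × F, (1 : ZMod q)) = 0 := by
        rw [Finset.sum_const, Finset.card_univ, hcardD, nsmul_eq_mul, mul_one]
        rw [Nat.cast_mul, ZMod.natCast_self, mul_zero]
      rw [ha, hb2, sub_zero]
    have hcontra : (1 : ZMod q) = 0 := by
      rw [← hside1, hswap, hside2]
    have hdvd : q ∣ 1 := by
      have h1 : ((1 : ℕ) : ZMod q) = 0 := by exact_mod_cast hcontra
      exact (ZMod.natCast_eq_zero_iff 1 q).mp h1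
    have := Nat.le_of_dvd one_pos hdvd
    omega
  · -- INFINITE CASE
    have hA0 : ∃ c, A c ≠ 0 := by
      by_contra hno
      push_neg at hno
      have hAf : A = 0 := by
        ext x
        exact hno x
      have hr0 : r = 0 := by
        rw [← hu₀]
        have : W₀ = ⊥ := by rw [hW₀def, hAf]; exact LinearMap.range_zero
        rw [this]
        simp
      have hrange0 : LinearMap.range (f (us 0)) = ⊥ := by
        have h1 := hmax (us 0)
        rw [hr0] at h1
        exact Submodule.finrank_eq_zero.mp (Nat.le_zero.mp h1)
      have hmem : f (us 0) v ∈ LinearMap.range (f (us 0)) := LinearMap.mem_range_self _ _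
      rw [hrange0] at hmem
      have hzero : f (us 0) v = 0 := hmem
      apply hind.ne_zero 0
      show W₀.mkQ (f (us 0) v) = 0
      rw [hzero, map_zero]
    obtain ⟨c, hc⟩ := hA0
    set ψ₀ : (Fin (n+1) → F) →ₗ[F] W ⧸ W₀ := (W₀.mkQ ∘ₗ f.flip v) ∘ₗ uvec with hψ₀
    set ψ₁ : (Fin (n+1) → F) →ₗ[F] W ⧸ W₀ := (W₀.mkQ ∘ₗ f.flip c) ∘ₗ uvec with hψ₁
    have hψ₀a : ∀ β, ψ₀ β = W₀.mkQ (f (uvec β) v) := fun β => rfl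
    have hψ₁a : ∀ β, ψ₁ β = W₀.mkQ (f (uvec β) c) := fun β => rfl
    have hker0 : LinearMap.ker ψ₀ = ⊥ := by
      rw [LinearMap.ker_eq_bot']
      intro β hβ
      apply hind' β
      rw [← hexpQ β v]
      exact hβ
    obtain ⟨ρ, hρ⟩ := ψ₀.exists_leftInverse_of_injective hker0
    by_cases hgood : ∃ t : F, t ≠ 0 ∧ ∀ β : Fin (n+1) → F, ψ₀ β + t • ψ₁ β = 0 → β = 0
    · obtain ⟨t, ht, htk⟩ := hgood
      set x := v + t • c with hx
      have hAx : A x ≠ 0 := by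
        rw [hx, map_add, hAv, map_smul, zero_add]
        exact fun h => (smul_eq_zero.mp h).elim (fun h' => ht h') (fun h' => hc h')
      have hindx : LinearIndependent F (fun j => W₀.mkQ (f (us j) x)) := by
        rw [Fintype.linearIndependent_iff]
        intro g hg
        have hsum : ψ₀ g + t • ψ₁ g = 0 := by
          rw [hψ₀a, hψ₁a]
          have h1 : f (uvec g) x = f (uvec g) v + t • f (uvec g) c := by
            rw [hx, map_add, map_smul]
          have h2 : W₀.mkQ (f (uvec g) x) = 0 := by
            rw [hexpQ]
            exact hg
          rw [h1, map_add, map_smul] at h2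
          exact h2
        have hg0 := htk g hsum
        intro i
        rw [hg0]
        rfl
      exact too_many_indep (hV x) (Fin.cons (A x) (fun j => f (us j) x))
        (fun i => Fin.cases (hmemflip x u₀) (fun j => hmemflip x (us j)) i)
        (indep_cons W₀ (hmemA x) hAx hindx)
    · push_neg at hgood
      set E := Infinite.natEmbedding F with hE
      set ts : Fin (n+2) → F := fun i => E (i.val + 1) - E 0 with hts
      have hts0 : ∀ i, ts i ≠ 0 := by
        intro i h
        have h2 : E (i.val + 1) = E 0 := by
          rw [hts] at h
          rwa [sub_eq_zero] at h
        have := E.injective h2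
        omega
      have htsinj : Function.Injective ts := by
        intro i j h
        rw [hts] at h
        simp only [sub_left_inj] at h
        have := E.injective h
        have hij : i.val = j.val := by omega
        exact Fin.ext hij
      choose βs hβs hβsne using fun i => hgood (ts i) (hts0 i)
      set S := ρ ∘ₗ ψ₁ with hS
      have heig : ∀ i, S (βs i) = (-(ts i)⁻¹) • βs i := by
        intro i
        have h1 : ψ₀ (βs i) = -(ts i • ψ₁ (βs i)) := eq_neg_of_add_eq_zero_left (hβs i)
        have h2 : βs i = ρ (ψ₀ (βs i)) := (LinearMap.congr_fun hρ (βs i)).symm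
        have h3 : βs i = -(ts i • S (βs i)) :=
          calc βs i = ρ (ψ₀ (βs i)) := h2
            _ = ρ (-(ts i • ψ₁ (βs i))) := by rw [← h1]
            _ = -(ts i • ρ (ψ₁ (βs i))) := by rw [map_neg, map_smul]
            _ = -(ts i • S (βs i)) := rfl
        have h4 : ts i • S (βs i) = -(βs i) := by
          conv_rhs => rw [h3, neg_neg]
        have h5 : S (βs i) = (ts i)⁻¹ • (ts i • S (βs i)) := by
          rw [smul_smul, inv_mul_cancel₀ (hts0 i), one_smul]
        rw [h5, h4, smul_neg, ← neg_smul]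
      have heigvec : ∀ i, Module.End.HasEigenvector S (-(ts i)⁻¹) (βs i) := fun i =>
        ⟨Module.End.mem_eigenspace_iff.mpr (heig i), hβsne i⟩
      have hμinj : Function.Injective (fun i : Fin (n+2) => -(ts i)⁻¹) := by
        intro i j h
        apply htsinj
        exact inv_injective (neg_injective h)
      have hli := Module.End.eigenvectors_linearIndependent' S _ hμinj _ heigvec
      have hcard := hli.fintype_card_le_finrank
      rw [Module.finrank_fin_fun] at hcard
      simp only [Fintype.card_fin] at hcard
      omega

theorem aux_neumann :
    ∀ (n m : ℕ) (W : Type u₄) [AddCommGroup W] [Module F W] (f : U →ₗ[F] V →ₗ[F] W),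
      (∀ u, Module.rank F (LinearMap.range (f u)) ≤ (m : Cardinal)) →
      (∀ v, Module.rank F (LinearMap.range (f.flip v)) ≤ (n : Cardinal)) →
      Module.rank F (Submodule.span F {w : W | ∃ u v, f u v = w}) ≤ ((m * n : ℕ) : Cardinal) := by
  intro n
  induction n with
  | zero =>
    intro m W _ _ f hU hV
    have hz : ∀ (u : U) (v : V), f u v = 0 := by
      intro u v
      have h1 := hV v
      have h2 : Module.rank F (LinearMap.range (f.flip v)) = 0 := le_antisymm (by simpa using h1)
        zero_le
      have h3 : LinearMap.range (f.flip v) = ⊥ := Submodule.rank_eq_zero.mp h2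
      have h4 : f u v ∈ LinearMap.range (f.flip v) := ⟨u, rfl⟩
      rw [h3] at h4
      simpa using h4
    have hsp : Submodule.span F {w : W | ∃ u v, f u v = w} = ⊥ := by
      rw [Submodule.span_eq_bot]
      rintro w ⟨u, v, rfl⟩
      exact hz u v
    rw [hsp]
    simp
  | succ n ih =>
    intro m W _ _ f hU hV
    obtain ⟨W₀, hW₀, hkey⟩ := key m n f hU hV
    set g := f.compr₂ W₀.mkQ with hg
    have hgu : ∀ u, LinearMap.range (g u) = (LinearMap.range (f u)).map W₀.mkQ := by
      intro u
      have : g u = W₀.mkQ ∘ₗ f u := rfl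
      rw [this, LinearMap.range_comp]
    have hgv : ∀ v, LinearMap.range (g.flip v) = (LinearMap.range (f.flip v)).map W₀.mkQ := by
      intro v
      have : g.flip v = W₀.mkQ ∘ₗ f.flip v := by ext u; rfl
      rw [this, LinearMap.range_comp]
    have hU' : ∀ u, Module.rank F (LinearMap.range (g u)) ≤ (m : Cardinal) := by
      intro u
      rw [hgu u]
      exact le_trans (rank_map_le _ _) (hU u)
    have hV' : ∀ v, Module.rank F (LinearMap.range (g.flip v)) ≤ (n : Cardinal) := by
      intro v
      rw [hgv v]
      exact hkey v
    have hIH := ih m (W ⧸ W₀) g hU' hV'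
    set Sp := Submodule.span F {w : W | ∃ u v, f u v = w} with hSp
    set φ : Sp →ₗ[F] W ⧸ W₀ := W₀.mkQ.comp Sp.subtype with hφ
    have hrn := LinearMap.rank_range_add_rank_ker φ
    have hrange : LinearMap.range φ =
        Submodule.span F {w' : W ⧸ W₀ | ∃ u v, g u v = w'} := by
      rw [hφ, LinearMap.range_comp, Submodule.range_subtype, hSp, Submodule.map_span]
      congr 1
      ext w'
      constructor
      · rintro ⟨w, ⟨u, v, rfl⟩, rfl⟩
        exact ⟨u, v, rfl⟩
      · rintro ⟨u, v, rfl⟩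
        exact ⟨f u v, ⟨u, v, rfl⟩, rfl⟩
    have h1 : Module.rank F (LinearMap.range φ) ≤ ((m * n : ℕ) : Cardinal) := by
      rw [hrange]
      exact hIH
    have h2 : Module.rank F (LinearMap.ker φ) ≤ (m : Cardinal) := by
      have hmem : ∀ x : LinearMap.ker φ, ((x : Sp) : W) ∈ W₀ := by
        intro x
        have hx : W₀.mkQ ((x : Sp) : W) = 0 := LinearMap.mem_ker.mp x.2
        exact (Submodule.Quotient.mk_eq_zero W₀).mp (by simpa using hx)
      set ι : (LinearMap.ker φ) →ₗ[F] W₀ :=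
        LinearMap.codRestrict W₀ (Sp.subtype.comp (LinearMap.ker φ).subtype) hmem with hι
      have hinj : Function.Injective ι := by
        intro x y hxy
        have h3 : (ι x : W) = (ι y : W) := congrArg (Subtype.val : W₀ → W) hxy
        have h4 : ((x : Sp) : W) = ((y : Sp) : W) := h3
        exact Subtype.val_injective (Subtype.val_injective h4)
      exact le_trans (LinearMap.rank_le_of_injective _ hinj) hW₀
    have hfinal : Module.rank F Sp ≤ ((m * n : ℕ) : Cardinal) + (m : Cardinal) := by
      rw [← hrn]
      exact add_le_add h1 h2
    refine le_trans hfinal ?_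
    have hc : ((m * n : ℕ) : Cardinal) + (m : Cardinal) = ((m * (n+1) : ℕ) : Cardinal) := by
      push_cast
      ring
    rw [hc]

end Key

/-- P. M. Neumann: if `f : U × V → W` is bilinear with `dim f(u,V) ≤ m` for each `u`
and `dim f(U,v) ≤ n` for each `v`, then `dim span f(U,V) ≤ m * n`. -/
theorem stmt_1 (F : Type*) [Field F]
    (U V W : Type*) [AddCommGroup U] [Module F U] [AddCommGroup V] [Module F V]
    [AddCommGroup W] [Module F W]
    (f : U →ₗ[F] V →ₗ[F] W) (m n : ℕ)
    (hU : ∀ u : U, Module.rank F ↥(LinearMap.range (f u)) ≤ (m : Cardinal))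
    (hV : ∀ v : V, Module.rank F ↥(LinearMap.range (f.flip v)) ≤ (n : Cardinal)) :
    Module.rank F ↥(Submodule.span F {w : W | ∃ u v, f u v = w}) ≤ ((m * n : ℕ) : Cardinal) :=
  aux_neumann n m W f hU hV
end

section
/- Let L be a vector space over F and W a subset of L that is stable under multiplication by scalars, such that there exist v_1,...,v_m ∈ L with L = W + Span{v_1,...,v_m}. Then the F-linear span of W equals the set 4^m · W = { w_1 + ⋯ + w_{4^m} : w_i ∈ W }. -/
open Finset

/-- Sums of `n` elements of `W`. -/
def sumsSet {L : Type*} [AddCommMonoid L] (n : ℕ) (W : Set L) : Set L :=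
  {z : L | ∃ g : Fin n → L, (∀ i, g i ∈ W) ∧ ∑ i, g i = z}

section

variable {F : Type*} [Field F] {L : Type*} [AddCommGroup L] [Module F L]

lemma sumsSet_add {W : Set L} {n j : ℕ} {a b : L}
    (ha : a ∈ sumsSet n W) (hb : b ∈ sumsSet j W) : a + b ∈ sumsSet (n + j) W := by
  obtain ⟨g, hg, rfl⟩ := ha
  obtain ⟨h, hh, rfl⟩ := hb
  refine ⟨Fin.append g h, ?_, ?_⟩
  · intro i
    refine Fin.addCases (motive := fun i => Fin.append g h i ∈ W) ?_ ?_ i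
    · intro j'; rw [Fin.append_left]; exact hg j'
    · intro j'; rw [Fin.append_right]; exact hh j'
  · rw [Fin.sum_univ_add]
    simp [Fin.append_left, Fin.append_right]

lemma sumsSet_cast {W : Set L} {n j : ℕ} (h : n = j) : sumsSet n W = sumsSet j W := by
  subst h; rfl

lemma sumsSet_smul {W : Set L} (hW : ∀ (c : F) (w : L), w ∈ W → c • w ∈ W)
    (c : F) {n : ℕ} {x : L} (hx : x ∈ sumsSet n W) : c • x ∈ sumsSet n W := by
  obtain ⟨g, hg, rfl⟩ := hx
  exact ⟨fun i => c • g i, fun i => hW c _ (hg i), by rw [Finset.smul_sum]⟩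

lemma sumsSet_zero_mem {W : Set L} (h0 : (0 : L) ∈ W) (n : ℕ) : (0 : L) ∈ sumsSet n W :=
  ⟨fun _ => 0, fun _ => h0, by simp⟩

lemma sumsSet_pad {W : Set L} (h0 : (0 : L) ∈ W) {n j : ℕ} {x : L}
    (hx : x ∈ sumsSet n W) (hnj : n ≤ j) : x ∈ sumsSet j W := by
  have h := sumsSet_add hx (sumsSet_zero_mem h0 (j - n))
  rw [add_zero] at h
  rwa [sumsSet_cast (show n + (j - n) = j by omega)] at h

lemma sumsSet_subset_span {W : Set L} {n : ℕ} :
    sumsSet n W ⊆ (Submodule.span F W : Set L) := by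
  rintro x ⟨g, hg, rfl⟩
  exact Submodule.sum_mem _ fun i _ => Submodule.subset_span (hg i)

lemma key_s2 : ∀ (m : ℕ) (W : Set L), (∀ (c : F) (w : L), w ∈ W → c • w ∈ W) →
    ∀ v : Fin m → L,
    (∀ x : L, ∃ w ∈ W, ∃ s ∈ Submodule.span F (Set.range v), x = w + s) →
    (Submodule.span F W : Set L) = sumsSet (4 ^ m) W := by
  intro m
  induction m with
  | zero =>
    intro W hW v hcodim
    have hWuniv : ∀ x : L, x ∈ W := by
      intro x
      obtain ⟨w, hw, s, hs, rfl⟩ := hcodim x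
      rw [Set.range_eq_empty v, Submodule.span_empty, Submodule.mem_bot] at hs
      subst hs; simpa using hw
    apply Set.Subset.antisymm
    · intro x _
      exact ⟨fun _ => x, fun _ => hWuniv x, by simp⟩
    · exact sumsSet_subset_span
  | succ m IH =>
    intro W hW v hcodim
    set u := v (Fin.last m) with hu
    -- zero is in W
    have h0W : (0 : L) ∈ W := by
      obtain ⟨w, hw, -⟩ := hcodim 0
      simpa using hW 0 w hw
    set k := 4 ^ m with hk
    have hkpos : 0 < k := Nat.pow_pos (by norm_num)
    -- the enlarged set
    set W' : Set L := {x : L | ∃ w ∈ W, ∃ c : F, x = w + c • u} with hW'def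
    have hWW' : W ⊆ W' := fun w hw => ⟨w, hw, 0, by simp⟩
    have hW' : ∀ (c : F) (w : L), w ∈ W' → c • w ∈ W' := by
      rintro c x ⟨w, hw, d, rfl⟩
      exact ⟨c • w, hW c w hw, c * d, by rw [smul_add, smul_smul]⟩
    have hcodim' : ∀ x : L, ∃ w ∈ W', ∃ s ∈ Submodule.span F (Set.range (v ∘ Fin.castSucc)),
        x = w + s := by
      intro x
      obtain ⟨w, hw, s, hs, rfl⟩ := hcodim x
      have hle : Submodule.span F (Set.range v) ≤
          Submodule.span F (Set.range (v ∘ Fin.castSucc)) ⊔ Submodule.span F {u} := by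
        rw [Submodule.span_le]
        rintro _ ⟨i, rfl⟩
        rcases Fin.eq_castSucc_or_eq_last i with ⟨j, rfl⟩ | rfl
        · exact Submodule.mem_sup_left (Submodule.subset_span ⟨j, rfl⟩)
        · exact Submodule.mem_sup_right (Submodule.subset_span rfl)
      obtain ⟨s', hs', t, ht, rfl⟩ := Submodule.mem_sup.mp (hle hs)
      obtain ⟨c, rfl⟩ := Submodule.mem_span_singleton.mp ht
      exact ⟨w + c • u, ⟨w, hw, c, rfl⟩, s', hs', by abel⟩
    have hspan' : (Submodule.span F W' : Set L) = sumsSet k W' :=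
      IH W' hW' (v ∘ Fin.castSucc) hcodim'
    -- every element of span W is (sum of k elements of W) + c • u
    have hsub : ∀ x ∈ Submodule.span F W, ∃ s ∈ sumsSet k W, ∃ c : F, x = s + c • u := by
      intro x hx
      have hx' : x ∈ sumsSet k W' := by
        rw [← hspan']
        exact Submodule.span_mono hWW' hx
      obtain ⟨g, hg, rfl⟩ := hx'
      choose w hw c hc using hg
      refine ⟨∑ i, w i, ⟨w, hw, rfl⟩, ∑ i, c i, ?_⟩
      rw [Finset.sum_congr rfl fun i _ => hc i, Finset.sum_add_distrib, Finset.sum_smul]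
    by_cases hcase : ∃ c : F, c ≠ 0 ∧ c • u ∈ sumsSet (3 * k) W
    · -- then every multiple of u is a sum of 3k elements of W
      obtain ⟨c, hc0, hcu⟩ := hcase
      have hall : ∀ d : F, d • u ∈ sumsSet (3 * k) W := by
        intro d
        have := sumsSet_smul hW (d * c⁻¹) hcu
        rwa [smul_smul, mul_assoc, inv_mul_cancel₀ hc0, mul_one] at this
      apply Set.Subset.antisymm
      · intro x hx
        obtain ⟨s, hs, d, rfl⟩ := hsub x hx
        have h := sumsSet_add hs (hall d)
        rwa [sumsSet_cast (show k + 3 * k = 4 ^ (m + 1) by rw [hk]; ring)] at h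
      · exact sumsSet_subset_span
    · push_neg at hcase
      -- sumsSet k W is closed under addition
      have hclosed : ∀ a b : L, a ∈ sumsSet k W → b ∈ sumsSet k W → a + b ∈ sumsSet k W := by
        intro a b ha hb
        have hab : a + b ∈ Submodule.span F W :=
          Submodule.add_mem _ (sumsSet_subset_span ha) (sumsSet_subset_span hb)
        obtain ⟨s, hs, d, heq⟩ := hsub _ hab
        have hns : (-1 : F) • s ∈ sumsSet k W := sumsSet_smul hW _ hs
        have hdu : d • u ∈ sumsSet (3 * k) W := by
          have h1 : d • u = a + b + (-1 : F) • s := by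
            rw [neg_one_smul]; rw [heq]; abel
          have h2 := sumsSet_add (sumsSet_add ha hb) hns
          rw [← h1] at h2
          rwa [sumsSet_cast (show k + k + k = 3 * k by ring)] at h2
        have hd0 : d = 0 := by
          by_contra hd
          exact hcase d hd hdu
        rw [hd0, zero_smul, add_zero] at heq
        rwa [heq]
      -- so it is a submodule containing W
      have hspansub : (Submodule.span F W : Set L) ⊆ sumsSet k W := by
        let P : Submodule F L :=
          { carrier := sumsSet k W
            add_mem' := fun ha hb => hclosed _ _ ha hb
            zero_mem' := sumsSet_zero_mem h0W k
            smul_mem' := fun c x hx => sumsSet_smul hW c hx }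
        have : Submodule.span F W ≤ P := by
          rw [Submodule.span_le]
          intro w hw
          exact sumsSet_pad h0W (show w ∈ sumsSet 1 W from ⟨fun _ => w, fun _ => hw, by simp⟩)
            hkpos
        exact this
      apply Set.Subset.antisymm
      · intro x hx
        exact sumsSet_pad h0W (hspansub hx)
          (by rw [hk]; calc 4 ^ m ≤ 4 ^ m * 4 := by omega
                _ = 4 ^ (m + 1) := by rw [pow_succ])
      · exact sumsSet_subset_span

end

/-- If `W ⊆ L` is stable under scalar multiplication and `L = W + Span{v_1,…,v_m}`,
then `span W` is the set of sums of `4^m` elements of `W`. -/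
theorem stmt_2 (F : Type*) [Field F] (L : Type*) [AddCommGroup L] [Module F L]
    (W : Set L) (hW : ∀ (c : F) (w : L), w ∈ W → c • w ∈ W)
    (m : ℕ) (v : Fin m → L)
    (hcodim : ∀ x : L, ∃ w ∈ W, ∃ s ∈ Submodule.span F (Set.range v), x = w + s) :
    (Submodule.span F W : Set L)
      = {z : L | ∃ g : Fin (4 ^ m) → L, (∀ i, g i ∈ W) ∧ ∑ i, g i = z} := by
  exact key_s2 m W hW v hcodim
end

section
/- In the algebra F_(q) generated over a field F by an invertible element a and an element x with relation a x = q x a (q ∈ F^×), for all integers i ≥ 0 and all integers j, one has (ad x^i)(a^j) = (∏_{l=0}^{i-1} (1 - q^{j-l})) x^i a^{j-i}, where the adjoint action is given by (ad x)(h) = x h a^{-1} - h x a^{-1}. -/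
section aux
variable {F : Type*} [Field F] {H : Type*} [Ring H] [Algebra F H]

lemma aux_comm (q : F) (hq : q ≠ 0) (a : Hˣ) (x : H)
    (rel : (a : H) * x = q • (x * (a : H))) :
    ∀ j : ℤ, ((a ^ j : Hˣ) : H) * x = q ^ j • (x * ((a ^ j : Hˣ) : H)) := by
  have hinv : ((a⁻¹ : Hˣ) : H) * x = q⁻¹ • (x * ((a⁻¹ : Hˣ) : H)) := by
    have h1 : x * ((a⁻¹ : Hˣ) : H) = q • (((a⁻¹ : Hˣ) : H) * x) := by
      have := congrArg (fun h => ((a⁻¹ : Hˣ) : H) * h * ((a⁻¹ : Hˣ) : H)) rel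
      simpa [mul_assoc, Units.inv_mul_cancel_left, Units.mul_inv_cancel_left,
        Algebra.mul_smul_comm, Algebra.smul_mul_assoc,
        ← mul_assoc, Units.inv_mul, Units.mul_inv] using this
    rw [h1, smul_smul, inv_mul_cancel₀ hq, one_smul]
  intro j
  induction j using Int.induction_on with
  | zero => simp
  | succ k ih =>
      have : ((a ^ ((k : ℤ) + 1) : Hˣ) : H) = ((a ^ (k : ℤ) : Hˣ) : H) * (a : H) := by
        rw [← Units.val_mul, zpow_add_one]
      rw [this, mul_assoc, rel, Algebra.mul_smul_comm, ← mul_assoc, ih,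
        Algebra.smul_mul_assoc, smul_smul, zpow_add_one₀ hq, mul_comm, mul_assoc]
  | pred k ih =>
      have : ((a ^ (-(k : ℤ) - 1) : Hˣ) : H) = ((a ^ (-(k : ℤ)) : Hˣ) : H) * ((a⁻¹ : Hˣ) : H) := by
        rw [← Units.val_mul, zpow_sub_one]
      rw [this, mul_assoc, hinv, Algebra.mul_smul_comm, ← mul_assoc, ih,
        Algebra.smul_mul_assoc, smul_smul, zpow_sub_one₀ hq, mul_comm q⁻¹, mul_assoc]

end aux

/-- In `F_(q)` (generated by an invertible `a` and `x` with `a x = q x a`),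
`(ad x^i)(a^j) = (∏_{l=0}^{i-1} (1 - q^{j-l})) x^i a^{j-i}`, where
`(ad x)(h) = x h a⁻¹ - h x a⁻¹`. -/
theorem stmt_3 (F : Type*) [Field F] (q : F) (hq : q ≠ 0)
    (H : Type*) [Ring H] [Algebra F H] (a : Hˣ) (x : H)
    (rel : (a : H) * x = q • (x * (a : H))) :
    ∀ (i : ℕ) (j : ℤ),
      (fun h : H => x * h * ((a⁻¹ : Hˣ) : H) - h * x * ((a⁻¹ : Hˣ) : H))^[i]
          ((a ^ j : Hˣ) : H)
        = (∏ l ∈ Finset.range i, (1 - q ^ (j - (l : ℤ)))) •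
            (x ^ i * ((a ^ (j - (i : ℤ)) : Hˣ) : H)) := by
  intro i j
  induction i with
  | zero => simp
  | succ i ih =>
      rw [Function.iterate_succ_apply', ih]
      set m : ℤ := j - i with hm
      have hcomm := aux_comm q hq a x rel m
      have hstep : x * (x ^ i * ((a ^ m : Hˣ) : H)) * ((a⁻¹ : Hˣ) : H)
            - (x ^ i * ((a ^ m : Hˣ) : H)) * x * ((a⁻¹ : Hˣ) : H)
          = (1 - q ^ m) • (x ^ (i + 1) * ((a ^ (m - 1) : Hˣ) : H)) := by
        have ha : ((a ^ m : Hˣ) : H) * ((a⁻¹ : Hˣ) : H) = ((a ^ (m - 1) : Hˣ) : H) := by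
          rw [← Units.val_mul, zpow_sub_one]
        rw [mul_assoc (x ^ i) _ x, hcomm, Algebra.mul_smul_comm, Algebra.smul_mul_assoc]
        rw [sub_smul, one_smul]
        congr 1
        · rw [← mul_assoc, ← pow_succ', mul_assoc, ha]
        · rw [mul_assoc, mul_assoc x, ha, ← mul_assoc, ← pow_succ]
      simp only [Algebra.mul_smul_comm, Algebra.smul_mul_assoc, ← smul_sub]
      rw [hstep, smul_smul, Finset.prod_range_succ, ← hm]
      have : j - ((i : ℤ) + 1) = m - 1 := by omega
      push_cast
      rw [this]
end

section
/- Let q ∈ F^× be an element that is not a root of unity, and let V be the vector space with basis {v_i : i ∈ ℤ} made into an F_(q)-module by a∘v_i = v_{i-1} and x∘v_i = q^i v_{i+1}. Then V is an irreducible (simple) F_(q)-module. -/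
/-- If `q` is not a root of unity, the module `V = ⊕_{i∈ℤ} F v_i` over `F_(q)`
with `a∘v_i = v_{i-1}`, `a⁻¹∘v_i = v_{i+1}`, `x∘v_i = q^i v_{i+1}` is irreducible. -/
theorem stmt_5 (F : Type*) [Field F] (q : F) (hq : q ≠ 0)
    (hroot : ∀ m : ℕ, 1 ≤ m → q ^ m ≠ 1) :
    (⊥ : Submodule F (ℤ →₀ F)) ≠ ⊤ ∧
    ∀ p : Submodule F (ℤ →₀ F),
      (∀ v ∈ p,
        Finsupp.lmapDomain F F (fun i : ℤ => i - 1) v ∈ p ∧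
        Finsupp.lmapDomain F F (fun i : ℤ => i + 1) v ∈ p ∧
        Finsupp.lsum F (fun i : ℤ => (q ^ i : F) • Finsupp.lsingle (R := F) (M := F) (i + 1)) v ∈ p) →
      p = ⊥ ∨ p = ⊤ := by
  have hpow : ∀ m : ℤ, q ^ m = 1 → m = 0 := by
    intro m hm
    by_contra h
    rcases lt_trichotomy m 0 with h1 | h2 | h3
    · have h2 : q ^ (-m) = 1 := by rw [zpow_neg, hm, inv_one]
      have h3 : q ^ ((-m).toNat) = 1 := by
        rw [← zpow_natCast, Int.toNat_of_nonneg (by omega)]; exact h2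
      exact hroot (-m).toNat (by omega) h3
    · exact h h2
    · have h4 : q ^ (m.toNat) = 1 := by
        rw [← zpow_natCast, Int.toNat_of_nonneg (by omega)]; exact hm
      exact hroot m.toNat (by omega) h4
  have hinj : ∀ a b : ℤ, q ^ a = q ^ b → a = b := by
    intro a b hab
    have h1 : q ^ (a - b) = 1 := by
      rw [zpow_sub₀ hq, hab, div_self (zpow_ne_zero _ hq)]
    have := hpow _ h1
    omega
  constructor
  · intro h
    have h1 : (Finsupp.single (0:ℤ) (1:F)) ∈ (⊥ : Submodule F (ℤ →₀ F)) := h ▸ Submodule.mem_top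
    rw [Submodule.mem_bot] at h1
    exact one_ne_zero (Finsupp.single_eq_zero.mp h1)
  · intro p hp
    by_cases hbot : p = ⊥
    · left; exact hbot
    right
    obtain ⟨v0, hv0p, hv0⟩ := (Submodule.ne_bot_iff p).mp hbot
    have key : ∀ n : ℕ, ∀ v : ℤ →₀ F, v ∈ p → v ≠ 0 → v.support.card ≤ n →
        ∃ i : ℤ, Finsupp.single i (1:F) ∈ p := by
      intro n
      induction n with
      | zero =>
        intro v hv hvne hcard
        have h0 : v.support = ∅ := Finset.card_eq_zero.mp (Nat.le_zero.mp hcard)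
        exact absurd (Finsupp.support_eq_empty.mp h0) hvne
      | succ n ih =>
        intro v hv hvne hcard
        by_cases h1 : v.support.card = 1
        · obtain ⟨i, c, hc, hveq⟩ := Finsupp.card_support_eq_one'.mp h1
          refine ⟨i, ?_⟩
          have h2 : c⁻¹ • v ∈ p := p.smul_mem _ hv
          rwa [hveq, Finsupp.smul_single, smul_eq_mul, inv_mul_cancel₀ hc] at h2
        · have h0 : v.support.card ≠ 0 := fun h =>
            hvne (Finsupp.support_eq_empty.mp (Finset.card_eq_zero.mp h))
          have hcard2 : 2 ≤ v.support.card := by omega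
          obtain ⟨i, hi⟩ := Finset.card_pos.mp (by omega : 0 < v.support.card)
          obtain ⟨j, hj, hji⟩ := Finset.exists_mem_ne (s := v.support) (by omega) i
          set Sv := Finsupp.lmapDomain F F (fun i : ℤ => i + 1) v with hSv
          set Xv := Finsupp.lsum F
            (fun i : ℤ => (q ^ i : F) • Finsupp.lsingle (R := F) (M := F) (i + 1)) v with hXv
          set w := Xv - q ^ i • Sv with hw
          have hwp : w ∈ p := p.sub_mem (hp v hv).2.2 (p.smul_mem _ (hp v hv).2.1)
          have hSk : ∀ k : ℤ, Sv k = v (k - 1) := by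
            intro k
            have h2 : Sv ((k-1) + 1) = v (k - 1) := by
              rw [hSv, Finsupp.lmapDomain_apply,
                Finsupp.mapDomain_apply (fun a b hab => by omega)]
            rwa [(by omega : k - 1 + 1 = k)] at h2
          have hXk : ∀ k : ℤ, Xv k = q ^ (k - 1) * v (k - 1) := by
            intro k
            rw [hXv, Finsupp.lsum_apply, Finsupp.sum_apply, Finsupp.sum]
            have h2 : ∀ m ∈ v.support,
                ((q ^ m • Finsupp.lsingle (R := F) (M := F) (m + 1)) (v m)) k
                = if m = k - 1 then q ^ m * v m else 0 := by
              intro m _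
              rw [LinearMap.smul_apply, Finsupp.lsingle_apply, Finsupp.smul_single,
                smul_eq_mul, Finsupp.single_apply]
              by_cases hm : m = k - 1
              · rw [if_pos (by omega), if_pos hm]
              · rw [if_neg (by omega), if_neg hm]
            rw [Finset.sum_congr rfl h2, Finset.sum_ite_eq' v.support (k-1)
              (fun m => q ^ m * v m)]
            by_cases hk : k - 1 ∈ v.support
            · rw [if_pos hk]
            · rw [if_neg hk, Finsupp.notMem_support_iff.mp hk, mul_zero]
          have hwk : ∀ k : ℤ, w k = v (k - 1) * (q ^ (k - 1) - q ^ i) := by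
            intro k
            rw [hw, Finsupp.sub_apply, Finsupp.smul_apply, smul_eq_mul, hSk, hXk]
            ring
          have hwne : w ≠ 0 := by
            intro h0
            have h2 := hwk (j + 1)
            rw [h0, (by omega : j + 1 - 1 = j)] at h2
            have hvj : v j ≠ 0 := Finsupp.mem_support_iff.mp hj
            have hqji : q ^ j - q ^ i ≠ 0 := sub_ne_zero.mpr (fun h => hji (hinj _ _ h))
            exact (mul_ne_zero hvj hqji) (by rw [← h2]; rfl)
          have hsub : w.support ⊆ (v.support.erase i).image (fun m => m + 1) := by
            intro k hk
            have hwkne : w k ≠ 0 := Finsupp.mem_support_iff.mp hk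
            rw [hwk] at hwkne
            have hv1 : v (k - 1) ≠ 0 := fun h => hwkne (by rw [h, zero_mul])
            have hq1 : k - 1 ≠ i := fun h => hwkne (by rw [h, sub_self, mul_zero])
            exact Finset.mem_image.mpr ⟨k - 1,
              Finset.mem_erase.mpr ⟨hq1, Finsupp.mem_support_iff.mpr hv1⟩, by omega⟩
          have hwcard : w.support.card ≤ n := by
            have hb1 : w.support.card ≤ ((v.support.erase i).image (fun m => m + 1)).card :=
              Finset.card_le_card hsub
            have hb2 : ((v.support.erase i).image (fun m => m + 1)).card ≤
                (v.support.erase i).card := Finset.card_image_le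
            have hb3 : (v.support.erase i).card = v.support.card - 1 :=
              Finset.card_erase_of_mem hi
            omega
          exact ih w hwp hwne hwcard
    obtain ⟨i, hi⟩ := key v0.support.card v0 hv0p hv0 le_rfl
    have hall : ∀ j : ℤ, Finsupp.single j (1:F) ∈ p := by
      have hd : ∀ d : ℤ, Finsupp.single (i + d) (1:F) ∈ p := by
        intro d
        induction d using Int.induction_on with
        | zero => rwa [add_zero]
        | succ k ihk =>
          have h2 := (hp _ ihk).2.1
          rw [Finsupp.lmapDomain_apply, Finsupp.mapDomain_single] at h2
          rwa [(by omega : i + (↑k + 1) = i + ↑k + 1)]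
        | pred k ihk =>
          have h2 := (hp _ ihk).1
          rw [Finsupp.lmapDomain_apply, Finsupp.mapDomain_single] at h2
          rwa [(by omega : i + (-↑k - 1) = i + -↑k - 1)]
      intro j
      have h2 := hd (j - i)
      rwa [(by omega : i + (j - i) = j)] at h2
    rw [eq_top_iff]
    intro v _
    have hveq : v = ∑ j ∈ v.support, (v j) • Finsupp.single j (1:F) := by
      conv_lhs => rw [← Finsupp.sum_single v]
      rw [Finsupp.sum]
      refine Finset.sum_congr rfl fun j _ => ?_
      rw [Finsupp.smul_single, smul_eq_mul, mul_one]
    rw [hveq]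
    exact Submodule.sum_mem p (fun j _ => p.smul_mem _ (hall j))
end

section
/- Let q ∈ F^× be an element that is not a root of unity, and let V be the F_(q)-module with basis {v_i : i ∈ ℤ}, a∘v_i = v_{i-1}, x∘v_i = q^i v_{i+1}. Then every F_(q)-module endomorphism of V is a scalar multiple of the identity. -/
/-- `q^m ≠ 1` for nonzero integer `m` when `q` is not a root of unity. -/
lemma zpow_ne_one_aux {F : Type*} [Field F] {q : F} (hq : q ≠ 0)
    (hroot : ∀ m : ℕ, 1 ≤ m → q ^ m ≠ 1) {m : ℤ} (hm : m ≠ 0) : q ^ m ≠ 1 := by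
  rcases lt_trichotomy m 0 with h | h | h
  · intro hone
    have h1 : q ^ (-m) ≠ 1 := by
      have h2 : 1 ≤ (-m).toNat := by omega
      have := hroot (-m).toNat h2
      rwa [← zpow_natCast, Int.toNat_of_nonneg (by omega)] at this
    apply h1
    rw [← neg_neg m, zpow_neg] at hone
    have := congrArg (·⁻¹) hone
    simpa using this
  · exact absurd h hm
  · have h2 : 1 ≤ m.toNat := by omega
    have := hroot m.toNat h2
    rwa [← zpow_natCast, Int.toNat_of_nonneg (by omega)] at this

/-- If `q` is not a root of unity, every `F_(q)`-module endomorphism of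
`V = ⊕_{i∈ℤ} F v_i` (with `a∘v_i = v_{i-1}`, `x∘v_i = q^i v_{i+1}`) is scalar. -/
theorem stmt_6 (F : Type*) [Field F] (q : F) (hq : q ≠ 0)
    (hroot : ∀ m : ℕ, 1 ≤ m → q ^ m ≠ 1)
    (φ : (ℤ →₀ F) →ₗ[F] (ℤ →₀ F))
    (hA : ∀ v : ℤ →₀ F,
      φ (Finsupp.lmapDomain F F (fun i : ℤ => i - 1) v)
        = Finsupp.lmapDomain F F (fun i : ℤ => i - 1) (φ v))
    (hX : ∀ v : ℤ →₀ F,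
      φ (Finsupp.lsum F (fun i : ℤ => (q ^ i : F) • Finsupp.lsingle (R := F) (M := F) (i + 1)) v)
        = Finsupp.lsum F (fun i : ℤ => (q ^ i : F) • Finsupp.lsingle (R := F) (M := F) (i + 1)) (φ v)) :
    ∃ c : F, φ = c • LinearMap.id := by
  set S : (ℤ →₀ F) →ₗ[F] (ℤ →₀ F) := Finsupp.lmapDomain F F (fun i : ℤ => i - 1) with hSdef
  set X : (ℤ →₀ F) →ₗ[F] (ℤ →₀ F) :=
    Finsupp.lsum F (fun i : ℤ => (q ^ i : F) • Finsupp.lsingle (R := F) (M := F) (i + 1)) with hXdef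
  have hSsingle : ∀ (i : ℤ) (a : F), S (Finsupp.single i a) = Finsupp.single (i - 1) a := by
    intro i a
    rw [hSdef, Finsupp.lmapDomain_apply, Finsupp.mapDomain_single]
  have hXsingle : ∀ (i : ℤ) (a : F), X (Finsupp.single i a) = q ^ i • Finsupp.single (i + 1) a := by
    intro i a
    rw [hXdef, Finsupp.lsum_single, LinearMap.smul_apply, Finsupp.lsingle_apply]
  have hD : ∀ (i : ℤ) (a : F),
      X (S (Finsupp.single i a)) = q ^ (i - 1) • Finsupp.single i a := by
    intro i a
    rw [hSsingle, hXsingle]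
    congr 2
    omega
  -- coordinate formula for D = X ∘ S
  have coord : ∀ (w : ℤ →₀ F) (j : ℤ), (X (S w)) j = q ^ (j - 1) * w j := by
    intro w j
    have key : (Finsupp.lapply (M := F) (R := F) j) ∘ₗ (X ∘ₗ S)
        = (q ^ (j - 1) : F) • (Finsupp.lapply (M := F) (R := F) j) := by
      apply Finsupp.lhom_ext
      intro i a
      simp only [LinearMap.comp_apply, LinearMap.smul_apply, Finsupp.lapply_apply]
      rw [hD i a, Finsupp.smul_apply, Finsupp.single_apply]
      by_cases hij : i = j
      · subst hij; rfl
      · rw [if_neg hij, smul_zero, smul_zero]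
    have h := DFunLike.congr_fun key w
    simp only [LinearMap.comp_apply, LinearMap.smul_apply, Finsupp.lapply_apply,
      smul_eq_mul] at h
    exact h
  -- φ commutes with D
  have hφD : ∀ v : ℤ →₀ F, φ (X (S v)) = X (S (φ v)) := by
    intro v
    calc φ (X (S v)) = X (φ (S v)) := hX (S v)
      _ = X (S (φ v)) := by rw [hA v]
  -- each φ(single k 1) is a multiple of single k 1
  have diag : ∀ k : ℤ, φ (Finsupp.single k 1)
      = (φ (Finsupp.single k 1)) k • Finsupp.single k 1 := by
    intro k
    set w := φ (Finsupp.single k 1) with hw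
    have heig : X (S w) = q ^ (k - 1) • w := by
      have h1 : φ (X (S (Finsupp.single k 1))) = X (S w) := hφD _
      rw [hD k 1, map_smul] at h1
      exact h1.symm
    have hvanish : ∀ j : ℤ, j ≠ k → w j = 0 := by
      intro j hjk
      have h1 : q ^ (j - 1) * w j = q ^ (k - 1) * w j := by
        rw [← coord w j, heig, Finsupp.smul_apply, smul_eq_mul]
      by_contra hne
      have h2 : (q ^ (j - 1) : F) = q ^ (k - 1) := mul_right_cancel₀ hne h1
      have hk0 : (q : F) ^ (k - 1) ≠ 0 := zpow_ne_zero _ hq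
      have h3 : (q ^ (j - k) : F) = 1 := by
        have h4 : q ^ (j - 1) * (q ^ (k - 1))⁻¹ = 1 := by
          rw [h2, mul_inv_cancel₀ hk0]
        rw [← zpow_neg, ← zpow_add₀ hq] at h4
        rw [show j - k = (j - 1) + -(k - 1) by ring]
        exact h4
      exact zpow_ne_one_aux hq hroot (by omega : j - k ≠ 0) h3
    ext j
    by_cases hjk : j = k
    · subst hjk
      rw [Finsupp.smul_apply, Finsupp.single_eq_same, smul_eq_mul, mul_one]
    · rw [hvanish j hjk, Finsupp.smul_apply, Finsupp.single_apply,
        if_neg (Ne.symm hjk), smul_zero]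
  -- the diagonal coefficients are constant
  set c : ℤ → F := fun k => (φ (Finsupp.single k 1)) k with hc
  have hstep : ∀ i : ℤ, c (i - 1) = c i := by
    intro i
    have h1 : φ (Finsupp.single (i - 1) 1) = c i • Finsupp.single (i - 1) 1 := by
      calc φ (Finsupp.single (i - 1) 1) = φ (S (Finsupp.single i 1)) := by rw [hSsingle]
        _ = S (φ (Finsupp.single i 1)) := hA _
        _ = S ((φ (Finsupp.single i 1)) i • Finsupp.single i 1) := by rw [← diag i]
        _ = c i • Finsupp.single (i - 1) 1 := by rw [map_smul, hSsingle]
    have h2 := congrArg (fun v : ℤ →₀ F => v (i - 1)) h1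
    simp only [Finsupp.smul_apply, Finsupp.single_eq_same, smul_eq_mul, mul_one] at h2
    exact h2
  have hconst : ∀ i : ℤ, c i = c 0 := by
    intro i
    induction i using Int.induction_on with
    | zero => rfl
    | succ n ih =>
      have h := hstep ((n : ℤ) + 1)
      rw [add_sub_cancel_right] at h
      rw [← h]
      exact ih
    | pred n ih =>
      have h := hstep (-(n : ℤ))
      rw [h]
      exact ih
  refine ⟨c 0, ?_⟩
  apply Finsupp.lhom_ext
  intro i a
  have hsing : (Finsupp.single i a : ℤ →₀ F) = a • Finsupp.single i (1 : F) := by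
    rw [Finsupp.smul_single, smul_eq_mul, mul_one]
  have h1 : φ (Finsupp.single i a) = c i • Finsupp.single i a := by
    rw [hsing, map_smul, diag i]
    exact smul_comm a _ _
  rw [h1, hconst i, LinearMap.smul_apply, LinearMap.id_apply]
end

section
/- Let q ∈ F be a primitive n-th root of unity and let V_n be the vector space with basis {v_i : i ∈ ℤ/nℤ}, with F_(q)-module structure a∘v_i = v_{i-1} and x∘v_i = q^i v_{i+1} (indices mod n). Then V_n is an irreducible F_(q)-module of dimension n, and its endomorphism algebra is F · id. -/
/-- If `q` is a primitive `n`-th root of unity, the module `V_n = ⊕_{i∈ℤ/n} F v_i`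
over `F_(q)` (with `a∘v_i = v_{i-1}`, `x∘v_i = q^i v_{i+1}`, indices mod `n`) is an
irreducible module of dimension `n` whose endomorphism algebra is `F·id`. -/
theorem stmt_7 (F : Type*) [Field F] (n : ℕ) (hn : 0 < n) (q : F)
    (hqn : q ^ n = 1) (hprim : ∀ k : ℕ, 0 < k → k < n → q ^ k ≠ 1) :
    Module.finrank F (ZMod n →₀ F) = n ∧
    ((⊥ : Submodule F (ZMod n →₀ F)) ≠ ⊤ ∧
      ∀ p : Submodule F (ZMod n →₀ F),
        (∀ v ∈ p,
          Finsupp.lmapDomain F F (fun i : ZMod n => i - 1) v ∈ p ∧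
          Finsupp.lmapDomain F F (fun i : ZMod n => i + 1) v ∈ p ∧
          Finsupp.lsum F (fun i : ZMod n => (q ^ i.val : F) • Finsupp.lsingle (R := F) (M := F) (i + 1)) v ∈ p) →
        p = ⊥ ∨ p = ⊤) ∧
    (∀ φ : (ZMod n →₀ F) →ₗ[F] (ZMod n →₀ F),
      (∀ v : ZMod n →₀ F,
        φ (Finsupp.lmapDomain F F (fun i : ZMod n => i - 1) v)
          = Finsupp.lmapDomain F F (fun i : ZMod n => i - 1) (φ v)) →
      (∀ v : ZMod n →₀ F,
        φ (Finsupp.lsum F (fun i : ZMod n => (q ^ i.val : F) • Finsupp.lsingle (R := F) (M := F) (i + 1)) v)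
          = Finsupp.lsum F (fun i : ZMod n => (q ^ i.val : F) • Finsupp.lsingle (R := F) (M := F) (i + 1)) (φ v)) →
      ∃ c : F, φ = c • LinearMap.id) := by
  haveI : NeZero n := ⟨hn.ne'⟩
  set A : (ZMod n →₀ F) →ₗ[F] (ZMod n →₀ F) :=
    Finsupp.lmapDomain F F (fun i : ZMod n => i - 1) with hAdef
  set X : (ZMod n →₀ F) →ₗ[F] (ZMod n →₀ F) :=
    Finsupp.lsum F (fun i : ZMod n => (q ^ i.val : F) •
      Finsupp.lsingle (R := F) (M := F) (i + 1)) with hXdef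
  set lam : ZMod n → F := fun i => q ^ (i - 1).val with hlamdef
  -- q ≠ 0
  have hq0 : q ≠ 0 := by
    intro h; rw [h, zero_pow hn.ne'] at hqn; exact zero_ne_one hqn
  -- injectivity of powers below n
  have hpow : ∀ a b : ℕ, a < n → b < n → q ^ a = q ^ b → a = b := by
    have key : ∀ a b : ℕ, a ≤ b → b < n → q ^ a = q ^ b → a = b := by
      intro a b hab hbn he
      by_contra hne
      have h1 : q ^ (b - a) * q ^ a = 1 * q ^ a := by
        rw [← pow_add, Nat.sub_add_cancel hab, ← he, one_mul]
      have h2 : q ^ (b - a) = 1 := mul_right_cancel₀ (pow_ne_zero a hq0) h1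
      exact hprim (b - a) (Nat.sub_pos_of_lt (lt_of_le_of_ne hab hne))
        (lt_of_le_of_lt (Nat.sub_le b a) hbn) h2
    intro a b ha hb he
    rcases le_total a b with h | h
    · exact key a b h hb he
    · exact (key b a h ha he.symm).symm
  have hlam_inj : Function.Injective lam := by
    intro i j hij
    have hv : (i - 1).val = (j - 1).val :=
      hpow _ _ (ZMod.val_lt _) (ZMod.val_lt _) hij
    have h2 : i - 1 = j - 1 := by
      have := congrArg (fun m : ℕ => (m : ZMod n)) hv
      simpa [ZMod.natCast_val, ZMod.cast_id] using this
    exact sub_left_injective h2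
  -- action on singles
  have hAs : ∀ (i : ZMod n) (c : F), A (Finsupp.single i c) = Finsupp.single (i - 1) c := by
    intro i c
    simp [hAdef, Finsupp.lmapDomain_apply, Finsupp.mapDomain_single]
  have hXs : ∀ (i : ZMod n) (c : F),
      X (Finsupp.single i c) = Finsupp.single (i + 1) (q ^ i.val * c) := by
    intro i c
    simp [hXdef, Finsupp.lsum_single, Finsupp.smul_single]
  have hTs : ∀ (i : ZMod n) (c : F),
      X (A (Finsupp.single i c)) = lam i • Finsupp.single i c := by
    intro i c
    rw [hAs, hXs, sub_add_cancel, Finsupp.smul_single, smul_eq_mul]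
  -- pointwise formula for T = X ∘ A
  have hTapp : ∀ (v : ZMod n →₀ F) (k : ZMod n), (X (A v)) k = lam k * v k := by
    intro v
    induction v using Finsupp.induction_linear with
    | zero => simp
    | add f g hf hg => intro k; simp [map_add, Finsupp.add_apply, hf, hg, mul_add]
    | single a b =>
      intro k
      rw [hTs]
      rcases eq_or_ne k a with rfl | hne
      · simp [Finsupp.single_eq_same]
      · simp [Finsupp.single_eq_of_ne hne]
  refine ⟨?_, ⟨?_, ?_⟩, ?_⟩
  · -- dimension
    rw [Module.finrank_finsupp_self, ZMod.card]
  · -- ⊥ ≠ ⊤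
    exact bot_ne_top
  · -- irreducibility
    intro p hcl
    by_cases hbot : p = ⊥
    · exact Or.inl hbot
    right
    -- a nonzero element of p
    obtain ⟨v, hvp, hv0⟩ := Submodule.exists_mem_ne_zero_of_ne_bot hbot
    -- step 1: some basis vector lies in p
    have key : ∀ m : ℕ, ∀ v ∈ p, v ≠ 0 → v.support.card = m →
        ∃ i, Finsupp.single i (1 : F) ∈ p := by
      intro m
      induction m using Nat.strong_induction_on with
      | _ m ih =>
        intro v hv hv0 hcard
        obtain ⟨i, hi⟩ := Finsupp.support_nonempty_iff.mpr hv0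
        by_cases hsub : v.support ⊆ {i}
        · obtain ⟨b, hb⟩ := Finsupp.support_subset_singleton'.mp hsub
          have hb0 : b ≠ 0 := by
            rintro rfl
            rw [Finsupp.single_zero] at hb
            exact hv0 hb
          have hmem : b⁻¹ • v ∈ p := Submodule.smul_mem p _ hv
          rw [hb, Finsupp.smul_single, smul_eq_mul, inv_mul_cancel₀ hb0] at hmem
          exact ⟨i, hmem⟩
        · obtain ⟨j, hjs, hji⟩ : ∃ j ∈ v.support, j ≠ i := by
            by_contra h
            push_neg at h
            exact hsub fun k hk => by simp [h k hk]
          set w : ZMod n →₀ F := X (A v) - lam j • v with hwdef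
          have hwp : w ∈ p :=
            Submodule.sub_mem p ((hcl _ (hcl v hv).1).2.2) (Submodule.smul_mem p _ hv)
          have hwapp : ∀ k, w k = (lam k - lam j) * v k := by
            intro k
            simp [hwdef, Finsupp.sub_apply, Finsupp.smul_apply, hTapp, sub_mul, smul_eq_mul]
          have hwi : w i ≠ 0 := by
            rw [hwapp]
            exact mul_ne_zero (sub_ne_zero_of_ne (fun h => hji (hlam_inj h).symm))
              (Finsupp.mem_support_iff.mp hi)
          have hw0 : w ≠ 0 := fun h => hwi (by simp [h])
          have hwsub : w.support ⊆ v.support \ {j} := by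
            intro k hk
            have hk' : w k ≠ 0 := Finsupp.mem_support_iff.mp hk
            rw [hwapp] at hk'
            have hvk : v k ≠ 0 := fun h => hk' (by simp [h])
            have hkj : k ≠ j := fun h => hk' (by simp [h])
            simp [Finsupp.mem_support_iff, hvk, hkj]
          have hlt : w.support.card < m := by
            rw [← hcard]
            have hss : w.support ⊂ v.support := by
              refine Finset.ssubset_iff_of_subset
                (hwsub.trans (Finset.sdiff_subset)) |>.mpr ?_
              exact ⟨j, hjs, fun h => by
                have := hwsub h; simp at this⟩
            exact Finset.card_lt_card hss
          exact ih _ hlt w hwp hw0 rfl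
    obtain ⟨i, hip⟩ := key _ v hvp hv0 rfl
    -- step 2: all basis vectors lie in p
    have hiter : ∀ m : ℕ, Finsupp.single (i - (m : ZMod n)) (1 : F) ∈ p := by
      intro m
      induction m with
      | zero => simpa using hip
      | succ k ihk =>
        have := (hcl _ ihk).1
        rw [hAs] at this
        have he : i - (k : ZMod n) - 1 = i - ((k + 1 : ℕ) : ZMod n) := by
          push_cast; ring
        rwa [he] at this
    have hall : ∀ j : ZMod n, Finsupp.single j (1 : F) ∈ p := by
      intro j
      have := hiter (i - j).val
      rwa [ZMod.natCast_val, ZMod.cast_id, sub_sub_cancel] at this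
    -- step 3: p = ⊤
    rw [Submodule.eq_top_iff']
    intro u
    rw [← Finsupp.sum_single u]
    refine Submodule.finsuppSum_mem F p u _ (fun k _ => ?_)
    have : (u k) • Finsupp.single k (1 : F) ∈ p := Submodule.smul_mem p _ (hall k)
    rwa [Finsupp.smul_single, smul_eq_mul, mul_one] at this
  · -- endomorphisms
    intro φ hA' hX'
    set c : ZMod n → F := fun i => (φ (Finsupp.single i 1)) i with hcdef
    have hφs : ∀ i : ZMod n, φ (Finsupp.single i 1) = c i • Finsupp.single i (1 : F) := by
      intro i
      set w : ZMod n →₀ F := φ (Finsupp.single i 1) with hwdef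
      have hTw : X (A w) = lam i • w := by
        rw [hwdef, ← hA' , ← hX', hTs, map_smul]
      have hzero : ∀ j, j ≠ i → w j = 0 := by
        intro j hj
        have h1 : lam j * w j = lam i * w j := by
          have := congrArg (fun f : ZMod n →₀ F => f j) hTw
          simpa [hTapp, Finsupp.smul_apply, smul_eq_mul] using this
        by_contra h
        exact hj (hlam_inj (mul_right_cancel₀ h h1))
      have hsub : w.support ⊆ {i} := by
        intro k hk
        rcases eq_or_ne k i with rfl | hne
        · simp
        · exact absurd (hzero k hne) (Finsupp.mem_support_iff.mp hk)
      have hws := Finsupp.support_subset_singleton.mp hsub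
      rw [Finsupp.smul_single, smul_eq_mul, mul_one]
      exact hws
    have hstep : ∀ i : ZMod n, c (i - 1) = c i := by
      intro i
      have h1 : φ (Finsupp.single (i - 1) 1) = c i • Finsupp.single (i - 1) (1 : F) := by
        rw [← hAs i 1, hA', hφs, map_smul, hAs]
      have h2 := congrArg (fun f : ZMod n →₀ F => f (i - 1)) h1
      simp only [Finsupp.smul_apply, Finsupp.single_eq_same, smul_eq_mul, mul_one] at h2
      exact h2
    have hconst : ∀ j : ZMod n, c j = c 0 := by
      have hiter : ∀ m : ℕ, c (0 - (m : ZMod n)) = c 0 := by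
        intro m
        induction m with
        | zero => simp
        | succ k ihk =>
          have he : (0 : ZMod n) - ((k + 1 : ℕ) : ZMod n) = (0 - (k : ZMod n)) - 1 := by
            push_cast; ring
          rw [he, hstep, ihk]
      intro j
      have := hiter (0 - j).val
      rwa [ZMod.natCast_val, ZMod.cast_id, sub_sub_cancel] at this
    refine ⟨c 0, Finsupp.lhom_ext fun a b => ?_⟩
    have h1 : φ (Finsupp.single a b) = b • φ (Finsupp.single a 1) := by
      rw [← map_smul, Finsupp.smul_single, smul_eq_mul, mul_one]
    rw [h1, hφs, hconst a]
    simp [Finsupp.smul_single, mul_comm]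
end

section
/- If q ∈ F^× is not a root of unity, then the algebra F_(q) does not satisfy any nontrivial polynomial identity. -/
open Finset

namespace Stmt10Aux


variable {F : Type*} [Field F]

theorem qpow_inj {q : F} (hq : q ≠ 0) (hroot : ∀ m : ℕ, 1 ≤ m → q ^ m ≠ 1) :
    Function.Injective fun n : ℕ => q ^ n := by
  intro n m h
  simp only at h
  by_contra hne
  wlog hlt : n < m generalizing n m
  · exact this h.symm (Ne.symm hne) (by omega)
  have h2 : q ^ n * q ^ (m - n) = q ^ n * 1 := by
    rw [← pow_add, mul_one, show n + (m - n) = m by omega]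
    exact h.symm
  exact hroot (m - n) (by omega) (mul_left_cancel₀ (pow_ne_zero n hq) h2)

section Tally

variable {S : Type*} [Fintype S] [DecidableEq S]

def tally {n : ℕ} (slot : Fin n → S) (ν : Fin n → ℕ) (s : S) : ℕ :=
  ∑ t, if slot t = s then ν t else 0

theorem tally_sum {n : ℕ} (slot : Fin n → S) (ν : Fin n → ℕ) :
    ∑ s, tally slot ν s = ∑ t, ν t := by
  unfold tally
  rw [Finset.sum_comm]
  refine Finset.sum_congr rfl fun t _ => ?_
  simp

theorem tally_dot {n : ℕ} (slot : Fin n → S) (ν : Fin n → ℕ) (μ : S → ℕ) :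
    ∑ s, μ s * tally slot ν s = ∑ t, μ (slot t) * ν t := by
  unfold tally
  simp only [Finset.mul_sum, mul_ite, mul_zero]
  rw [Finset.sum_comm]
  refine Finset.sum_congr rfl fun t _ => ?_
  simp

theorem tally_diag {k : ℕ} (w₀ : List (Fin k)) (ν : Fin w₀.length → ℕ) (i : Fin k)
    (r : Fin w₀.length) :
    tally (fun t => (w₀.get t, t)) ν (i, r) = if w₀.get r = i then ν r else 0 := by
  unfold tally
  rw [Finset.sum_eq_single r]
  · simp [Prod.ext_iff]
  · intro t _ ht
    simp only [Prod.mk.injEq, ite_eq_right_iff, and_imp]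
    intro _ h
    exact absurd h ht
  · simp

end Tally

theorem core {k : ℕ} (w₀ w : List (Fin k)) (φ : Fin w.length → Fin w₀.length)
    (hκ : ∀ s, tally (fun t => (w.get t, φ t)) (fun _ => 1) s
        = tally (fun t : Fin w₀.length => (w₀.get t, t)) (fun _ => 1) s)
    (hA : ∀ s, tally (fun t => (w.get t, φ t)) (fun t => w.length - 1 - ↑t) s
        = tally (fun t : Fin w₀.length => (w₀.get t, t)) (fun t => w₀.length - 1 - ↑t) s) :
    w = w₀ ∧ ∀ t, (φ t : ℕ) = ↑t := by
  have hlen : w.length = w₀.length := by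
    have h := Finset.sum_congr rfl (fun s (_ : s ∈ (univ : Finset (Fin k × Fin w₀.length))) => hκ s)
    rw [tally_sum, tally_sum] at h
    simpa using h
  have hget : ∀ t, w₀.get (φ t) = w.get t := by
    intro t
    have h1 : 1 ≤ tally (fun t => (w.get t, φ t)) (fun _ => 1) (w.get t, φ t) := by
      unfold tally
      refine le_trans ?_ (Finset.single_le_sum (f := fun t' : Fin w.length =>
        if (w.get t', φ t') = (w.get t, φ t) then 1 else 0) (fun _ _ => Nat.zero_le _)
        (Finset.mem_univ t))
      simp
    rw [hκ, tally_diag] at h1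
    by_contra hne
    rw [if_neg hne] at h1
    omega
  have hinj : Function.Injective φ := by
    intro t t' hφeq
    by_contra hne
    have hslot : (w.get t', φ t') = (w.get t, φ t) := by
      rw [hφeq, ← hget t, ← hget t', hφeq]
    have h2 : 2 ≤ tally (fun t => (w.get t, φ t)) (fun _ => 1) (w.get t, φ t) := by
      unfold tally
      calc (2:ℕ) = ∑ t'' ∈ ({t, t'} : Finset _),
            if (w.get t'', φ t'') = (w.get t, φ t) then 1 else 0 := by
            rw [Finset.sum_pair hne, if_pos rfl, if_pos hslot]
        _ ≤ _ := Finset.sum_le_sum_of_subset (Finset.subset_univ _)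
    rw [hκ, tally_diag] at h2
    split_ifs at h2 <;> omega
  have hφ : ∀ t, (φ t : ℕ) = ↑t := by
    intro t
    have h3 : tally (fun t => (w.get t, φ t)) (fun t => w.length - 1 - ↑t) (w.get t, φ t)
        = w.length - 1 - ↑t := by
      unfold tally
      rw [Finset.sum_eq_single t]
      · rw [if_pos rfl]
      · intro t' _ hne
        rw [if_neg]
        intro hc
        exact hne (hinj (congrArg Prod.snd hc))
      · simp
    rw [hA, tally_diag, if_pos (hget t)] at h3
    have ht1 := t.isLt
    have ht2 := (φ t).isLt
    omega
  refine ⟨List.ext_get hlen fun n h1 h2 => ?_, hφ⟩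
  have he : φ ⟨n, h1⟩ = ⟨n, h2⟩ := Fin.ext (by rw [hφ ⟨n, h1⟩])
  rw [← hget ⟨n, h1⟩, he]



variable {F : Type*} [Field F] {H : Type*} [Ring H] [Algebra F H] {q : F} {aH x : H}

def umon (x aH : H) (n m : ℕ) : H := x ^ n * aH ^ m

theorem sc1 (rel : aH * x = q • (x * aH)) (n : ℕ) :
    aH * x ^ n = q ^ n • (x ^ n * aH) := by
  induction n with
  | zero => simp
  | succ n ih =>
    rw [pow_succ, ← mul_assoc, ih, smul_mul_assoc, mul_assoc, rel, mul_smul_comm, smul_smul,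
      ← mul_assoc, ← pow_succ, ← pow_succ]

theorem sc2 (rel : aH * x = q • (x * aH)) (m n : ℕ) :
    aH ^ m * x ^ n = q ^ (m * n) • (x ^ n * aH ^ m) := by
  induction m with
  | zero => simp
  | succ m ih =>
    rw [pow_succ, mul_assoc, sc1 rel n, mul_smul_comm, ← mul_assoc, ih, smul_mul_assoc,
      smul_smul, mul_assoc, ← pow_succ, ← pow_add]
    congr 1
    ring

theorem umul (rel : aH * x = q • (x * aH)) (n m n' m' : ℕ) :
    umon x aH n m * umon x aH n' m' = q ^ (m * n') • umon x aH (n + n') (m + m') := by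
  unfold umon
  rw [mul_assoc, ← mul_assoc (aH ^ m), sc2 rel, smul_mul_assoc, mul_smul_comm]
  rw [mul_assoc (x ^ n') (aH ^ m), ← mul_assoc (x ^ n) (x ^ n'), ← pow_add, ← pow_add]

theorem uprod (rel : aH * x = q • (x * aH)) (n : ℕ) (ν : Fin n → ℕ) :
    (List.ofFn fun t => umon x aH 1 (ν t)).prod
      = q ^ (∑ t, ν t * (n - 1 - ↑t)) • umon x aH n (∑ t, ν t) := by
  induction n with
  | zero => simp [umon]
  | succ n ih =>
    rw [List.ofFn_succ, List.prod_cons, ih (fun t => ν t.succ), mul_smul_comm, umul rel,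
      smul_smul, ← pow_add]
    have hrw : ∀ t : Fin n, ν t.succ * (n + 1 - 1 - ↑t.succ) = ν t.succ * (n - 1 - ↑t) :=
      fun t => by rw [Fin.val_succ]; congr 1; omega
    congr 1
    · congr 1
      rw [Fin.sum_univ_succ, Finset.sum_congr rfl fun t (_ : t ∈ univ) => hrw t]
      simp only [Fin.val_zero, Nat.sub_zero, Nat.add_sub_cancel]
      exact Nat.add_comm _ _
    · unfold umon
      rw [Nat.add_comm 1 n, Fin.sum_univ_succ]

theorem umon_eq (b : Module.Basis (ℕ × ℤ) F H) (a : Hˣ)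
    (hb : ∀ p : ℕ × ℤ, b p = x ^ p.1 * ((a ^ p.2 : Hˣ) : H)) (n m : ℕ) :
    umon x (a : H) n m = b (n, (m : ℤ)) := by
  rw [hb]
  simp [umon, zpow_natCast, Units.val_pow_eq_pow_val]

theorem prod_ofFn_smul :
    ∀ (n : ℕ) (α : Fin n → F) (v : Fin n → H),
    (List.ofFn fun t => α t • v t).prod = (∏ t, α t) • (List.ofFn v).prod := by
  intro n
  induction n with
  | zero => simp
  | succ n ih =>
    intro α v
    rw [List.ofFn_succ, List.prod_cons, List.ofFn_succ, List.prod_cons, ih,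
      smul_mul_smul_comm, Fin.prod_univ_succ]

theorem expand_prod {ι : Type*} (D : ℕ) (h : ι → Fin D → H) :
    ∀ w : List ι, (w.map fun i => ∑ r, h i r).prod
      = ∑ φ : Fin w.length → Fin D, (List.ofFn fun t => h (w.get t) (φ t)).prod := by
  intro w
  induction w with
  | nil => simp
  | cons i w ih =>
    rw [List.map_cons, List.prod_cons, ih, Finset.sum_mul_sum, ← Fintype.sum_prod_type']
    refine Fintype.sum_equiv (Fin.consEquiv fun _ => Fin D) _ _ fun p => ?_
    rw [List.ofFn_succ, List.prod_cons]
    simp [Fin.consEquiv, Fin.cons_zero, Fin.cons_succ]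



variable {F : Type*} [Field F]

theorem qpow_inj' {q : F} (hq : q ≠ 0) (hroot : ∀ m : ℕ, 1 ≤ m → q ^ m ≠ 1)
    {n m : ℕ} (h : q ^ n = q ^ m) : n = m := by
  by_contra hne
  wlog hlt : n < m generalizing n m
  · exact this h.symm (Ne.symm hne) (by omega)
  have h2 : q ^ n * q ^ (m - n) = q ^ n * 1 := by
    rw [← pow_add, mul_one, show n + (m - n) = m by omega]
    exact h.symm
  exact hroot (m - n) (by omega) (mul_left_cancel₀ (pow_ne_zero n hq) h2)

theorem charF {q : F} (hq : q ≠ 0) (hroot : ∀ m : ℕ, 1 ≤ m → q ^ m ≠ 1)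
    {S : Type*} [Fintype S] [DecidableEq S]
    (J : Finset (S → ℕ)) (r : (S → ℕ) → F)
    (h : ∀ μ : S → ℕ, ∑ κ ∈ J, r κ * q ^ (∑ s, μ s * κ s) = 0) :
    ∀ κ ∈ J, r κ = 0 := by
  classical
  let M := Multiplicative (S → ℕ)
  let χ : (S → ℕ) → (M →* F) := fun κ =>
    { toFun := fun μ => q ^ (∑ s, (Multiplicative.toAdd μ) s * κ s)
      map_one' := by simp
      map_mul' := by
        intro μ₁ μ₂
        have he : (∑ s, (Multiplicative.toAdd (μ₁ * μ₂)) s * κ s)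
            = (∑ s, (Multiplicative.toAdd μ₁) s * κ s)
              + (∑ s, (Multiplicative.toAdd μ₂) s * κ s) := by
          rw [← Finset.sum_add_distrib]
          refine Finset.sum_congr rfl fun s _ => ?_
          show (Multiplicative.toAdd μ₁ s + Multiplicative.toAdd μ₂ s) * κ s = _
          ring
        show q ^ (∑ s, (Multiplicative.toAdd (μ₁ * μ₂)) s * κ s) = _
        rw [he, pow_add] }
  have hχ : Function.Injective χ := by
    intro κ κ' hkk
    funext s
    have h2 := DFunLike.congr_fun hkk (Multiplicative.ofAdd (fun s' => if s' = s then 1 else 0))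
    simp only [χ, MonoidHom.coe_mk, OneHom.coe_mk, toAdd_ofAdd, ite_mul, one_mul,
      zero_mul] at h2
    rw [Finset.sum_ite_eq' univ s, Finset.sum_ite_eq' univ s, if_pos (mem_univ s),
      if_pos (mem_univ s)] at h2
    exact qpow_inj' hq hroot h2
  have li := (linearIndependent_monoidHom M F).comp χ hχ
  intro κ hκ
  refine linearIndependent_iff'.mp li J r ?_ κ hκ
  funext μ
  have h3 := h (Multiplicative.toAdd μ)
  simpa [Finset.sum_apply, χ] using h3

theorem charH {q : F} (hq : q ≠ 0) (hroot : ∀ m : ℕ, 1 ≤ m → q ^ m ≠ 1)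
    {H : Type*} [Ring H] [Algebra F H] (b : Module.Basis (ℕ × ℤ) F H)
    {S : Type*} [Fintype S] [DecidableEq S]
    (J : Finset (S → ℕ)) (v : (S → ℕ) → H)
    (h : ∀ μ : S → ℕ, ∑ κ ∈ J, q ^ (∑ s, μ s * κ s) • v κ = 0) :
    ∀ κ ∈ J, v κ = 0 := by
  intro κ hκ
  rw [← b.forall_coord_eq_zero_iff]
  intro p
  refine charF hq hroot J (fun κ => b.coord p (v κ)) (fun μ => ?_) κ hκ
  have h2 := congrArg (b.coord p) (h μ)
  simpa [mul_comm] using h2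


theorem eval_formula {H : Type*} [Ring H] [Algebra F H] {q : F} {aH x : H}
    (rel : aH * x = q • (x * aH)) {k : ℕ} (D : ℕ)
    (μ m : Fin k × Fin D → ℕ) (w : List (Fin k)) :
    (w.map fun i => ∑ r : Fin D, q ^ (μ (i, r)) • umon x aH 1 (m (i, r))).prod
      = ∑ φ : Fin w.length → Fin D,
          q ^ ((∑ s, μ s * tally (fun t => (w.get t, φ t)) (fun _ => 1) s)
              + ∑ s, m s * tally (fun t => (w.get t, φ t)) (fun t => w.length - 1 - ↑t) s)
            • umon x aH w.length
              (∑ s, m s * tally (fun t => (w.get t, φ t)) (fun _ => 1) s) := by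
  classical
  rw [expand_prod]
  refine Finset.sum_congr rfl fun φ _ => ?_
  rw [prod_ofFn_smul, uprod rel, smul_smul, Finset.prod_pow_eq_pow_sum, ← pow_add,
    tally_dot, tally_dot, tally_dot]
  simp [mul_one]

end Stmt10Aux

open Finset Stmt10Aux in
/-- If `q` is not a root of unity, then `F_(q)` satisfies no nontrivial
polynomial identity. -/
theorem stmt_10 (F : Type*) [Field F] (q : F) (hq : q ≠ 0)
    (hroot : ∀ m : ℕ, 1 ≤ m → q ^ m ≠ 1)
    (H : Type*) [Ring H] [Algebra F H] (a : Hˣ) (x : H)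
    (rel : (a : H) * x = q • (x * (a : H)))
    (b : Module.Basis (ℕ × ℤ) F H) (hb : ∀ p : ℕ × ℤ, b p = x ^ p.1 * ((a ^ p.2 : Hˣ) : H)) :
    ¬ ∃ (k : ℕ) (f : FreeAlgebra F (Fin k)),
        f ≠ 0 ∧ ∀ g : Fin k → H, FreeAlgebra.lift F g f = 0 := by
  classical
  rintro ⟨k, f, hf0, hid⟩
  set e := FreeAlgebra.equivMonoidAlgebraFreeMonoid (R := F) (X := Fin k) with he
  set c : FreeMonoid (Fin k) →₀ F := (e f).coeff with hcdef
  have hc0 : c ≠ 0 := by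
    intro h0
    apply hf0
    have h1 := congrArg e.symm (MonoidAlgebra.coeff_eq_zero.mp h0)
    simpa [hcdef] using h1
  have heval : ∀ g : Fin k → H,
      ∑ w ∈ c.support, c w • ((FreeMonoid.toList w).map g).prod = 0 := by
    intro g
    have hcomp : (MonoidAlgebra.lift F H (FreeMonoid (Fin k)) (FreeMonoid.lift g)).comp
        e.toAlgHom = FreeAlgebra.lift F g := by
      apply FreeAlgebra.hom_ext
      funext i
      simp [e, FreeAlgebra.equivMonoidAlgebraFreeMonoid]
    have h1 : (MonoidAlgebra.lift F H (FreeMonoid (Fin k)) (FreeMonoid.lift g)) (e f) = 0 := by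
      have h2 : (MonoidAlgebra.lift F H (FreeMonoid (Fin k)) (FreeMonoid.lift g)) (e f)
          = FreeAlgebra.lift F g f := by
        rw [← hcomp]; rfl
      rw [h2, hid g]
    rw [MonoidAlgebra.lift_apply] at h1
    simpa [Finsupp.sum, FreeMonoid.lift_apply, ← hcdef] using h1
  obtain ⟨w₀, hw₀⟩ := Finsupp.support_nonempty_iff.mpr hc0
  set W₀ : List (Fin k) := FreeMonoid.toList w₀ with hW₀
  set D : ℕ := W₀.length with hD
  have master : ∀ μ m : Fin k × Fin D → ℕ,
      ∑ w ∈ c.support, ∑ φ : Fin (FreeMonoid.toList w).length → Fin D,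
        (c w * q ^ ((∑ s, μ s * tally (fun t => ((FreeMonoid.toList w).get t, φ t)) (fun _ => 1) s)
            + ∑ s, m s * tally (fun t => ((FreeMonoid.toList w).get t, φ t))
                (fun t => (FreeMonoid.toList w).length - 1 - ↑t) s))
          • umon x (a : H) (FreeMonoid.toList w).length
              (∑ s, m s * tally (fun t => ((FreeMonoid.toList w).get t, φ t)) (fun _ => 1) s)
        = 0 := by
    intro μ m
    have hg := heval (fun i => ∑ r : Fin D, q ^ (μ (i, r)) • umon x (a : H) 1 (m (i, r)))
    refine Eq.trans (Finset.sum_congr rfl fun w _ => ?_) hg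
    rw [eval_formula rel D μ m (FreeMonoid.toList w), Finset.smul_sum]
    refine Finset.sum_congr rfl fun φ _ => ?_
    rw [smul_smul]
  set K : Finset ((Fin k × Fin D) → ℕ) := c.support.biUnion (fun w' =>
      Finset.image (fun φ' : Fin (FreeMonoid.toList w').length → Fin D =>
        tally (fun t => ((FreeMonoid.toList w').get t, φ' t)) (fun _ => 1)) Finset.univ)
    with hK
  have hKmem : ∀ w ∈ c.support, ∀ φ : Fin (FreeMonoid.toList w).length → Fin D,
      tally (fun t => ((FreeMonoid.toList w).get t, φ t)) (fun _ => 1) ∈ K := by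
    intro w hw φ
    exact Finset.mem_biUnion.mpr ⟨w, hw, Finset.mem_image.mpr ⟨φ, Finset.mem_univ φ, rfl⟩⟩
  have hsum1 : ∀ (w : List (Fin k)) (φ : Fin w.length → Fin D),
      ∑ s, tally (fun t => (w.get t, φ t)) (fun _ => 1) s = w.length := by
    intro w φ
    rw [tally_sum]
    simp
  have master2 : ∀ (m : Fin k × Fin D → ℕ) (κv), κv ∈ K →
      (∑ w ∈ c.support, ∑ φ ∈ Finset.univ.filter
          (fun φ : Fin (FreeMonoid.toList w).length → Fin D =>
            tally (fun t => ((FreeMonoid.toList w).get t, φ t)) (fun _ => 1) = κv),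
        (c w * q ^ (∑ s, m s * tally (fun t => ((FreeMonoid.toList w).get t, φ t))
            (fun t => (FreeMonoid.toList w).length - 1 - ↑t) s))
          • umon x (a : H) (∑ s, κv s) (∑ s, m s * κv s)) = 0 := by
    intro m
    refine charH hq hroot b K
      (fun κv => ∑ w ∈ c.support, ∑ φ ∈ Finset.univ.filter
          (fun φ : Fin (FreeMonoid.toList w).length → Fin D =>
            tally (fun t => ((FreeMonoid.toList w).get t, φ t)) (fun _ => 1) = κv),
        (c w * q ^ (∑ s, m s * tally (fun t => ((FreeMonoid.toList w).get t, φ t))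
            (fun t => (FreeMonoid.toList w).length - 1 - ↑t) s))
          • umon x (a : H) (∑ s, κv s) (∑ s, m s * κv s))
      (fun μ => ?_)
    rw [← master μ m]
    simp only [Finset.smul_sum]
    rw [Finset.sum_comm]
    refine Finset.sum_congr rfl fun w hw => ?_
    rw [← Finset.sum_fiberwise_of_maps_to (fun φ _ => hKmem w hw φ) _]
    refine Finset.sum_congr rfl fun κv _ => Finset.sum_congr rfl fun φ hφ => ?_
    obtain ⟨-, h5⟩ := Finset.mem_filter.mp hφ
    subst h5
    rw [hsum1 (FreeMonoid.toList w) φ, smul_smul]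
    congr 1
    rw [pow_add]
    ring

  set κ₀ : (Fin k × Fin D) → ℕ := tally (fun t : Fin D => (W₀.get t, t)) (fun _ => 1)
    with hκ₀def
  have hκ₀K : κ₀ ∈ K := hKmem w₀ hw₀ (fun t => t)
  have hvanish : ∀ m : Fin k × Fin D → ℕ,
      (∑ w ∈ c.support, ∑ φ ∈ Finset.univ.filter
          (fun φ : Fin (FreeMonoid.toList w).length → Fin D =>
            tally (fun t => ((FreeMonoid.toList w).get t, φ t)) (fun _ => 1) = κ₀),
        c w * q ^ (∑ s, m s * tally (fun t => ((FreeMonoid.toList w).get t, φ t))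
            (fun t => (FreeMonoid.toList w).length - 1 - ↑t) s)) = 0 := by
    intro m
    have h4 := master2 m κ₀ hκ₀K
    have h5 : (∑ w ∈ c.support, ∑ φ ∈ Finset.univ.filter
          (fun φ : Fin (FreeMonoid.toList w).length → Fin D =>
            tally (fun t => ((FreeMonoid.toList w).get t, φ t)) (fun _ => 1) = κ₀),
        c w * q ^ (∑ s, m s * tally (fun t => ((FreeMonoid.toList w).get t, φ t))
            (fun t => (FreeMonoid.toList w).length - 1 - ↑t) s))
          • umon x (a : H) (∑ s, κ₀ s) (∑ s, m s * κ₀ s) = 0 := by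
      rw [Finset.sum_smul]
      refine Eq.trans (Finset.sum_congr rfl fun w _ => ?_) h4
      rw [Finset.sum_smul]
    rcases (b.smul_eq_zero).mp h5 with h6 | h6
    · exact h6
    · exact absurd h6 (by rw [umon_eq b a hb]; exact b.ne_zero _)
  set J : Finset ((Fin k × Fin D) → ℕ) := c.support.biUnion (fun w' =>
      Finset.image (fun φ' : Fin (FreeMonoid.toList w').length → Fin D =>
        tally (fun t => ((FreeMonoid.toList w').get t, φ' t))
          (fun t => (FreeMonoid.toList w').length - 1 - ↑t))
        (Finset.univ.filter (fun φ' : Fin (FreeMonoid.toList w').length → Fin D =>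
          tally (fun t => ((FreeMonoid.toList w').get t, φ' t)) (fun _ => 1) = κ₀))) with hJ
  have hJmem : ∀ w ∈ c.support, ∀ φ ∈ Finset.univ.filter
      (fun φ : Fin (FreeMonoid.toList w).length → Fin D =>
        tally (fun t => ((FreeMonoid.toList w).get t, φ t)) (fun _ => 1) = κ₀),
      tally (fun t => ((FreeMonoid.toList w).get t, φ t))
        (fun t => (FreeMonoid.toList w).length - 1 - ↑t) ∈ J := by
    intro w hw φ hφ
    exact Finset.mem_biUnion.mpr ⟨w, hw, Finset.mem_image.mpr ⟨φ, hφ, rfl⟩⟩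
  have hvanish2 : ∀ Av, Av ∈ J →
      (∑ w ∈ c.support, ∑ φ ∈ (Finset.univ.filter
          (fun φ : Fin (FreeMonoid.toList w).length → Fin D =>
            tally (fun t => ((FreeMonoid.toList w).get t, φ t)) (fun _ => 1) = κ₀)).filter
          (fun φ => tally (fun t => ((FreeMonoid.toList w).get t, φ t))
            (fun t => (FreeMonoid.toList w).length - 1 - ↑t) = Av),
        c w) = 0 := by
    refine charF hq hroot J
      (fun Av => ∑ w ∈ c.support, ∑ φ ∈ (Finset.univ.filter
          (fun φ : Fin (FreeMonoid.toList w).length → Fin D =>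
            tally (fun t => ((FreeMonoid.toList w).get t, φ t)) (fun _ => 1) = κ₀)).filter
          (fun φ => tally (fun t => ((FreeMonoid.toList w).get t, φ t))
            (fun t => (FreeMonoid.toList w).length - 1 - ↑t) = Av),
        c w)
      (fun m => ?_)
    rw [← hvanish m]
    simp only [Finset.sum_mul]
    rw [Finset.sum_comm]
    refine Finset.sum_congr rfl fun w hw => ?_
    refine Eq.trans ?_ (Finset.sum_fiberwise_of_maps_to (fun φ hφ => hJmem w hw φ hφ)
      (fun φ => c w * q ^ (∑ s, m s * tally (fun t => ((FreeMonoid.toList w).get t, φ t))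
        (fun t => (FreeMonoid.toList w).length - 1 - ↑t) s)))
    refine Finset.sum_congr rfl fun Av _ => Finset.sum_congr rfl fun φ hφ => ?_
    obtain ⟨-, h5⟩ := Finset.mem_filter.mp hφ
    subst h5
    rfl
  set A₀ : (Fin k × Fin D) → ℕ := tally (fun t : Fin D => (W₀.get t, t))
      (fun t => W₀.length - 1 - ↑t) with hA₀def
  have hA₀J : A₀ ∈ J :=
    Finset.mem_biUnion.mpr ⟨w₀, hw₀, Finset.mem_image.mpr ⟨(fun t => t),
      Finset.mem_filter.mpr ⟨Finset.mem_univ _, rfl⟩, rfl⟩⟩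
  have hfinal := hvanish2 A₀ hA₀J
  have hzero : ∀ w ∈ c.support, w ≠ w₀ →
      (∑ φ ∈ (Finset.univ.filter
          (fun φ : Fin (FreeMonoid.toList w).length → Fin D =>
            tally (fun t => ((FreeMonoid.toList w).get t, φ t)) (fun _ => 1) = κ₀)).filter
          (fun φ => tally (fun t => ((FreeMonoid.toList w).get t, φ t))
            (fun t => (FreeMonoid.toList w).length - 1 - ↑t) = A₀),
        c w) = 0 := by
    intro w _ hne
    have hempty : ((Finset.univ.filter
          (fun φ : Fin (FreeMonoid.toList w).length → Fin D =>
            tally (fun t => ((FreeMonoid.toList w).get t, φ t)) (fun _ => 1) = κ₀)).filter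
          (fun φ => tally (fun t => ((FreeMonoid.toList w).get t, φ t))
            (fun t => (FreeMonoid.toList w).length - 1 - ↑t) = A₀)) = ∅ := by
      refine Finset.eq_empty_of_forall_notMem fun φ hφ => ?_
      obtain ⟨h1', h2⟩ := Finset.mem_filter.mp hφ
      obtain ⟨-, h1⟩ := Finset.mem_filter.mp h1'
      obtain ⟨hww, -⟩ := core W₀ (FreeMonoid.toList w) φ
        (fun s => congrFun h1 s) (fun s => congrFun h2 s)
      exact hne (FreeMonoid.toList.injective (hww.trans hW₀))
    rw [hempty, Finset.sum_empty]
  rw [Finset.sum_eq_single_of_mem w₀ hw₀ hzero] at hfinal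
  have hset : ((Finset.univ.filter
        (fun φ : Fin (FreeMonoid.toList w₀).length → Fin D =>
          tally (fun t => ((FreeMonoid.toList w₀).get t, φ t)) (fun _ => 1) = κ₀)).filter
        (fun φ => tally (fun t => ((FreeMonoid.toList w₀).get t, φ t))
          (fun t => (FreeMonoid.toList w₀).length - 1 - ↑t) = A₀))
      = {fun t => t} := by
    ext φ
    simp only [Finset.mem_filter, Finset.mem_univ, true_and, Finset.mem_singleton]
    constructor
    · rintro ⟨h1, h2⟩
      obtain ⟨-, h3⟩ := core W₀ (FreeMonoid.toList w₀) φ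
        (fun s => congrFun h1 s) (fun s => congrFun h2 s)
      funext t
      exact Fin.ext (h3 t)
    · rintro rfl
      exact ⟨rfl, rfl⟩
  rw [hset, Finset.sum_singleton] at hfinal
  exact Finsupp.mem_support_iff.mp hw₀ hfinal
end

section
/- Let G be a group and H = F[G] its group algebra over a field F, with the adjoint (conjugation) action (ad g)(h) = g h g^{-1} for g ∈ G. Then H_fin = F[Δ(G)], where Δ(G) is the set of elements of G having finitely many conjugates. -/
open Finsupp Submodule

lemma conj_eq_mapDomain (F : Type*) [Field F] (G : Type*) [Group G] (u : G)
    (h : MonoidAlgebra F G) :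
    MonoidAlgebra.of F G u * h * MonoidAlgebra.of F G u⁻¹ =
      MonoidAlgebra.mapDomain (fun g => u * g * u⁻¹) h := by
  induction h using MonoidAlgebra.induction_linear with
  | zero => simp
  | add f g hf hg => rw [mul_add, add_mul, hf, hg, MonoidAlgebra.mapDomain_add]
  | single a b =>
    rw [MonoidAlgebra.mapDomain_single]
    simp only [MonoidAlgebra.of_apply, MonoidAlgebra.single_mul_single, one_mul, mul_one]

set_option synthInstance.maxHeartbeats 800000 in
/-- For a group algebra `H = F[G]` with adjoint (conjugation) action
`(ad g)(h) = g h g⁻¹`, one has `H_fin = F[Δ(G)]`, where `Δ(G)` is the set of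
elements of `G` with finitely many conjugates. -/
theorem stmt_14 (F : Type*) [Field F] (G : Type*) [Group G] :
    {h : MonoidAlgebra F G |
        FiniteDimensional F ↥(Submodule.span F
          {k : MonoidAlgebra F G | ∃ g : G,
            MonoidAlgebra.of F G g * h * MonoidAlgebra.of F G g⁻¹ = k})}
      = ↑(Submodule.span F
          ((fun g : G => (MonoidAlgebra.of F G g : MonoidAlgebra F G)) ''
            {g : G | Set.Finite {y : G | ∃ s : G, s * g * s⁻¹ = y}})) := by
  classical
  set Δ : Set G := {g : G | Set.Finite {y : G | ∃ s : G, s * g * s⁻¹ = y}} with hΔ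
  have hspan : Submodule.span F
      ((fun g : G => (MonoidAlgebra.of F G g : MonoidAlgebra F G)) '' Δ)
      = MonoidAlgebra.supported F F Δ := by
    rw [MonoidAlgebra.supported_eq_span_single]
    congr 1
  ext h
  rw [Set.mem_setOf_eq, SetLike.mem_coe, hspan, MonoidAlgebra.mem_supported]
  constructor
  · intro hfd
    set V : Submodule F (MonoidAlgebra F G) := Submodule.span F
      {k : MonoidAlgebra F G | ∃ g : G,
        MonoidAlgebra.of F G g * h * MonoidAlgebra.of F G g⁻¹ = k} with hV
    obtain ⟨t, ht⟩ : V.FG := (Submodule.fg_iff_finiteDimensional V).mpr hfd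
    set T : Finset G := t.sup (fun x : MonoidAlgebra F G => x.coeff.support) with hT
    have hVT : V ≤ MonoidAlgebra.supported F F (↑T : Set G) := by
      rw [← ht, Submodule.span_le]
      intro x hx
      rw [SetLike.mem_coe, MonoidAlgebra.mem_supported]
      exact_mod_cast Finset.le_sup (f := fun x : MonoidAlgebra F G => x.coeff.support) hx
    intro g hg
    have key : ∀ u : G, u * g * u⁻¹ ∈ T := by
      intro u
      have hmem : MonoidAlgebra.of F G u * h * MonoidAlgebra.of F G u⁻¹ ∈ V :=
        Submodule.subset_span ⟨u, rfl⟩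
      have hsupp := hVT hmem
      rw [MonoidAlgebra.mem_supported, conj_eq_mapDomain, MonoidAlgebra.mapDomain.eq_1, MonoidAlgebra.coeff_ofCoeff,
        Finsupp.mapDomain_support_of_injective (fun a b hab => by
          simpa using hab) h.coeff] at hsupp
      exact hsupp (Finset.mem_image_of_mem _ hg)
    refine Set.Finite.subset T.finite_toSet ?_
    rintro y ⟨s, rfl⟩
    exact key s
  · intro hsub
    set K : Set G := ⋃ g ∈ h.coeff.support, {y : G | ∃ s : G, s * g * s⁻¹ = y} with hK
    have hKfin : K.Finite :=
      Set.Finite.biUnion h.coeff.support.finite_toSet (fun g hg => hsub hg)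
    have hle : Submodule.span F
        {k : MonoidAlgebra F G | ∃ g : G,
          MonoidAlgebra.of F G g * h * MonoidAlgebra.of F G g⁻¹ = k}
        ≤ MonoidAlgebra.supported F F K := by
      rw [Submodule.span_le]
      rintro _ ⟨u, rfl⟩
      rw [SetLike.mem_coe, MonoidAlgebra.mem_supported, conj_eq_mapDomain, MonoidAlgebra.mapDomain.eq_1, MonoidAlgebra.coeff_ofCoeff,
        Finsupp.mapDomain_support_of_injective (fun a b hab => by simpa using hab) h.coeff]
      intro y hy
      rw [Finset.coe_image] at hy
      obtain ⟨g, hg, rfl⟩ := hy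
      exact Set.mem_biUnion hg ⟨u, rfl⟩
    haveI := FiniteDimensional.span_of_finite (K := F) (V := MonoidAlgebra F G)
      (hKfin.image fun i => (MonoidAlgebra.single i (1 : F) : MonoidAlgebra F G))
    exact Submodule.finiteDimensional_of_le
      (le_trans hle (le_of_eq (MonoidAlgebra.supported_eq_span_single F K)))
end
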